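/- Let (θ_A, θ_B, θ_S) be a classical decaying solution of the three-phase heat system on (0,T) with constants κ_A, κ_B, κ_S, α_S > 0, and define E(t) = ∫_{ℝ³₊} θ_A(x,t)² dx + ∫_{ℝ³₋} θ_B(x,t)² dx + α_S ∫_{ℝ²} θ_S(x_h,t)² dx_h. Then for every t ∈ (0,T), E is differentiable at t and E'(t) = −2κ_A ∫_{ℝ³₊} |∇θ_A(x,t)|² dx − 2κ_B ∫_{ℝ³₋} |∇θ_B(x,t)|² dx − 2κ_S ∫_{ℝ²} |∇_hθ_S(x_h,t)|² dx_h. In particular the interface flux terms cancel in the energy balance. -/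

import Mathlib

open MeasureTheory Set

noncomputable section

/- We realize `ℝ³` as `(ℝ × ℝ) × ℝ`, writing a point `x` as `(x_h, x₃)` with
horizontal part `x_h = x.1 ∈ ℝ × ℝ` and vertical coordinate `x₃ = x.2`. -/

/-- The standard basis directions of `ℝ³ = (ℝ × ℝ) × ℝ`. -/
def e1 : (ℝ × ℝ) × ℝ := ((1, 0), 0)
def e2 : (ℝ × ℝ) × ℝ := ((0, 1), 0)
def e3 : (ℝ × ℝ) × ℝ := ((0, 0), 1)

/-- Open upper half space `ℝ³₊ = {x : x₃ > 0}`. -/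
def upperHalf : Set ((ℝ × ℝ) × ℝ) := {x | 0 < x.2}
/-- Open lower half space `ℝ³₋ = {x : x₃ < 0}`. -/
def lowerHalf : Set ((ℝ × ℝ) × ℝ) := {x | x.2 < 0}
/-- Closed upper half space `{x : x₃ ≥ 0}`. -/
def UA : Set ((ℝ × ℝ) × ℝ) := {x | 0 ≤ x.2}
/-- Closed lower half space `{x : x₃ ≤ 0}`. -/
def UB : Set ((ℝ × ℝ) × ℝ) := {x | x.2 ≤ 0}

open Filter Topology

lemma UA_eq : UA = (univ : Set (ℝ×ℝ)) ×ˢ Ici (0:ℝ) := by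
  ext x; simp [UA, Set.mem_prod, mem_Ici]
lemma UB_eq : UB = (univ : Set (ℝ×ℝ)) ×ˢ Iic (0:ℝ) := by
  ext x; simp [UB, Set.mem_prod, mem_Iic]
lemma upperHalf_eq : upperHalf = (univ : Set (ℝ×ℝ)) ×ˢ Ioi (0:ℝ) := by
  ext x; simp [upperHalf, Set.mem_prod, mem_Ioi]
lemma lowerHalf_eq : lowerHalf = (univ : Set (ℝ×ℝ)) ×ˢ Iio (0:ℝ) := by
  ext x; simp [lowerHalf, Set.mem_prod, mem_Iio]

lemma isOpen_upperHalf : IsOpen upperHalf := isOpen_lt continuous_const continuous_snd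
lemma isOpen_lowerHalf : IsOpen lowerHalf := isOpen_lt continuous_snd continuous_const
lemma upperHalf_subset_UA : upperHalf ⊆ UA := fun x (hx : 0 < x.2) => (le_of_lt hx : 0 ≤ x.2)
lemma lowerHalf_subset_UB : lowerHalf ⊆ UB := fun x (hx : x.2 < 0) => (le_of_lt hx : x.2 ≤ 0)
lemma measurableSet_upperHalf : MeasurableSet upperHalf := isOpen_upperHalf.measurableSet
lemma measurableSet_lowerHalf : MeasurableSet lowerHalf := isOpen_lowerHalf.measurableSet

lemma UA_mem_nhds {x : (ℝ×ℝ)×ℝ} (hx : x ∈ upperHalf) : UA ∈ 𝓝 x :=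
  mem_of_superset (isOpen_upperHalf.mem_nhds hx) upperHalf_subset_UA
lemma UB_mem_nhds {x : (ℝ×ℝ)×ℝ} (hx : x ∈ lowerHalf) : UB ∈ 𝓝 x :=
  mem_of_superset (isOpen_lowerHalf.mem_nhds hx) lowerHalf_subset_UB

lemma uniqueDiffOn_UA : UniqueDiffOn ℝ UA := by
  rw [UA_eq]; exact uniqueDiffOn_univ.prod (uniqueDiffOn_Ici 0)
lemma uniqueDiffOn_UB : UniqueDiffOn ℝ UB := by
  rw [UB_eq]; exact uniqueDiffOn_univ.prod (uniqueDiffOn_Iic 0)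

lemma norm_e1 : ‖e1‖ = 1 := by simp [e1, Prod.norm_def]
lemma norm_e2 : ‖e2‖ = 1 := by simp [e2, Prod.norm_def]
lemma norm_e3 : ‖e3‖ = 1 := by simp [e3, Prod.norm_def]

lemma one_le_onePlus {E : Type*} [NormedAddCommGroup E] (x : E) : (1:ℝ) ≤ 1 + ‖x‖ := by
  have := norm_nonneg x; linarith

lemma onePlus_pow_pos {E : Type*} [NormedAddCommGroup E] (x : E) (k : ℕ) :
    (0:ℝ) < (1 + ‖x‖)^k := pow_pos (by have := norm_nonneg x; linarith) k

/-- integrability of `c/(1+‖x‖)^4` in a finite-dimensional space of dim < 4 -/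
lemma integrable_decay (E : Type*) [NormedAddCommGroup E] [NormedSpace ℝ E]
    [FiniteDimensional ℝ E] [MeasureSpace E] [BorelSpace E] [(volume : Measure E).IsAddHaarMeasure]
    (hdim : (Module.finrank ℝ E : ℝ) < 4)
    (c : ℝ) : Integrable (fun x : E => c / (1 + ‖x‖)^4) := by
  have h := (integrable_one_add_norm (E := E) (μ := volume) (r := 4) hdim).const_mul c
  refine h.congr (Filter.Eventually.of_forall fun x => ?_)
  have h1 : (0:ℝ) < 1 + ‖x‖ := by have := norm_nonneg x; linarith
  show c * (1 + ‖x‖) ^ (-(4:ℝ)) = c / (1 + ‖x‖) ^ 4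
  rw [Real.rpow_neg h1.le]
  rw [show ((4:ℝ) = ((4:ℕ):ℝ)) by norm_num, Real.rpow_natCast]
  rw [div_eq_mul_inv]

instance : (volume : Measure ((ℝ×ℝ)×ℝ)).IsAddHaarMeasure := by
  rw [MeasureTheory.Measure.volume_eq_prod]; infer_instance

lemma integrable_decay3 (c : ℝ) : Integrable (fun x : (ℝ×ℝ)×ℝ => c / (1 + ‖x‖)^4) :=
  integrable_decay _ (by simp; norm_num) c
lemma integrable_decay2 (c : ℝ) : Integrable (fun x : ℝ×ℝ => c / (1 + ‖x‖)^4) :=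
  integrable_decay _ (by simp; norm_num) c
lemma integrable_decay1 (c : ℝ) : Integrable (fun x : ℝ => c / (1 + ‖x‖)^4) :=
  integrable_decay _ (by simp) c


/-- Partial derivative within a set `s` (one-sided up to the boundary), in direction `v`. -/
noncomputable def pdW (s : Set ((ℝ × ℝ) × ℝ)) (v : (ℝ × ℝ) × ℝ)
    (f : (ℝ × ℝ) × ℝ → ℝ) (x : (ℝ × ℝ) × ℝ) : ℝ :=
  fderivWithin ℝ f s x v

/-- Laplacian `Δf` computed with derivatives within `s`. -/
noncomputable def lapW (s : Set ((ℝ × ℝ) × ℝ)) (f : (ℝ × ℝ) × ℝ → ℝ)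
    (x : (ℝ × ℝ) × ℝ) : ℝ :=
  pdW s e1 (pdW s e1 f) x + pdW s e2 (pdW s e2 f) x + pdW s e3 (pdW s e3 f) x

/-- `|∇f|²` computed with derivatives within `s`. -/
noncomputable def gradSqW (s : Set ((ℝ × ℝ) × ℝ)) (f : (ℝ × ℝ) × ℝ → ℝ)
    (x : (ℝ × ℝ) × ℝ) : ℝ :=
  (pdW s e1 f x) ^ 2 + (pdW s e2 f x) ^ 2 + (pdW s e3 f x) ^ 2

/-- Horizontal partial derivative on `ℝ²` in direction `v`. -/
noncomputable def pdH (v : ℝ × ℝ) (f : ℝ × ℝ → ℝ) (x : ℝ × ℝ) : ℝ := fderiv ℝ f x v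

/-- Horizontal Laplacian `Δ_h f = ∂₁²f + ∂₂²f` on `ℝ²`. -/
noncomputable def lapH (f : ℝ × ℝ → ℝ) (x : ℝ × ℝ) : ℝ :=
  pdH (1, 0) (pdH (1, 0) f) x + pdH (0, 1) (pdH (0, 1) f) x

/-- `|∇_h f|²` on `ℝ²`. -/
noncomputable def gradSqH (f : ℝ × ℝ → ℝ) (x : ℝ × ℝ) : ℝ :=
  (pdH (1, 0) f x) ^ 2 + (pdH (0, 1) f x) ^ 2

section helpers

variable {F : Type*} [NormedAddCommGroup F] [NormedSpace ℝ F]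

lemma hasFDerivAt_apply_const {E : Type*} [NormedAddCommGroup E] [NormedSpace ℝ E]
    {G : E → E →L[ℝ] F} {x : E} (h : DifferentiableAt ℝ G x) (v : E) :
    HasFDerivAt (fun y => G y v) ((ContinuousLinearMap.apply ℝ F v).comp (fderiv ℝ G x)) x :=
  ((ContinuousLinearMap.apply ℝ F v).hasFDerivAt).comp x h.hasFDerivAt

lemma hasDerivAt_vert {f : (ℝ×ℝ)×ℝ → F} {L : (ℝ×ℝ)×ℝ →L[ℝ] F} {xh : ℝ×ℝ} {s : ℝ}
    (h : HasFDerivAt f L (xh, s)) :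
    HasDerivAt (fun r => f (xh, r)) (L e3) s := by
  have hline : HasDerivAt (fun r : ℝ => ((xh, r) : (ℝ×ℝ)×ℝ)) (((0,0),1) : (ℝ×ℝ)×ℝ) s :=
    (hasDerivAt_const _ _).prodMk (hasDerivAt_id _)
  exact h.comp_hasDerivAt _ hline

lemma hasDerivAt_horiz1 {f : (ℝ×ℝ)×ℝ → F} {L : (ℝ×ℝ)×ℝ →L[ℝ] F} {a b s : ℝ}
    (h : HasFDerivAt f L ((a, b), s)) :
    HasDerivAt (fun r => f ((r, b), s)) (L e1) a := by
  have hline : HasDerivAt (fun r : ℝ => (((r, b), s) : (ℝ×ℝ)×ℝ)) ((((1:ℝ),(0:ℝ)),(0:ℝ)) : (ℝ×ℝ)×ℝ) a :=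
    ((hasDerivAt_id _).prodMk (hasDerivAt_const _ _)).prodMk (hasDerivAt_const _ _)
  exact h.comp_hasDerivAt a hline

lemma hasDerivAt_horiz2 {f : (ℝ×ℝ)×ℝ → F} {L : (ℝ×ℝ)×ℝ →L[ℝ] F} {a b s : ℝ}
    (h : HasFDerivAt f L ((a, b), s)) :
    HasDerivAt (fun r => f ((a, r), s)) (L e2) b := by
  have hline : HasDerivAt (fun r : ℝ => (((a, r), s) : (ℝ×ℝ)×ℝ)) ((((0:ℝ),(1:ℝ)),(0:ℝ)) : (ℝ×ℝ)×ℝ) b :=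
    ((hasDerivAt_const _ _).prodMk (hasDerivAt_id _)).prodMk (hasDerivAt_const _ _)
  exact h.comp_hasDerivAt b hline

lemma hasDerivAt_h1 {f : ℝ×ℝ → F} {L : ℝ×ℝ →L[ℝ] F} {a b : ℝ}
    (h : HasFDerivAt f L (a, b)) :
    HasDerivAt (fun r => f (r, b)) (L (1, 0)) a := by
  have hline : HasDerivAt (fun r : ℝ => ((r, b) : ℝ×ℝ)) (((1:ℝ),(0:ℝ)) : ℝ×ℝ) a :=
    (hasDerivAt_id _).prodMk (hasDerivAt_const _ _)
  exact h.comp_hasDerivAt a hline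

lemma hasDerivAt_h2 {f : ℝ×ℝ → F} {L : ℝ×ℝ →L[ℝ] F} {a b : ℝ}
    (h : HasFDerivAt f L (a, b)) :
    HasDerivAt (fun r => f (a, r)) (L (0, 1)) b := by
  have hline : HasDerivAt (fun r : ℝ => ((a, r) : ℝ×ℝ)) (((0:ℝ),(1:ℝ)) : ℝ×ℝ) b :=
    (hasDerivAt_const _ _).prodMk (hasDerivAt_id _)
  exact h.comp_hasDerivAt b hline

end helpers

section interiorA

variable {φ : (ℝ×ℝ)×ℝ → ℝ}

lemma pdW_eq_fderivA {x : (ℝ×ℝ)×ℝ} (hx : x ∈ upperHalf) :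
    fderivWithin ℝ φ UA x = fderiv ℝ φ x := fderivWithin_of_mem_nhds (UA_mem_nhds hx)

lemma pdW2_eq_fderivA {x : (ℝ×ℝ)×ℝ} (hx : x ∈ upperHalf) :
    fderivWithin ℝ (fderivWithin ℝ φ UA) UA x = fderiv ℝ (fderiv ℝ φ) x := by
  rw [fderivWithin_of_mem_nhds (UA_mem_nhds hx)]
  apply Filter.EventuallyEq.fderiv_eq
  filter_upwards [isOpen_upperHalf.mem_nhds hx] with y hy
  exact pdW_eq_fderivA hy

lemma diffAtA (hφ2 : ContDiffOn ℝ 2 φ UA) {x : (ℝ×ℝ)×ℝ} (hx : x ∈ upperHalf) :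
    DifferentiableAt ℝ φ x :=
  (hφ2.contDiffAt (UA_mem_nhds hx)).differentiableAt (by norm_num)

lemma diffAt_fderivA (hφ2 : ContDiffOn ℝ 2 φ UA) {x : (ℝ×ℝ)×ℝ} (hx : x ∈ upperHalf) :
    DifferentiableAt ℝ (fderiv ℝ φ) x :=
  ((hφ2.contDiffAt (UA_mem_nhds hx)).fderiv_right (m := 1) (by norm_num)).differentiableAt one_ne_zero

lemma pdWpdW_eqA (hφ2 : ContDiffOn ℝ 2 φ UA) {x : (ℝ×ℝ)×ℝ} (hx : x ∈ upperHalf)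
    (v : (ℝ×ℝ)×ℝ) :
    pdW UA v (pdW UA v φ) x = fderiv ℝ (fderiv ℝ φ) x v v := by
  show fderivWithin ℝ (fun y => fderivWithin ℝ φ UA y v) UA x v = _
  rw [fderivWithin_of_mem_nhds (UA_mem_nhds hx)]
  have he : (fun y => fderivWithin ℝ φ UA y v) =ᶠ[nhds x] (fun y => fderiv ℝ φ y v) := by
    filter_upwards [isOpen_upperHalf.mem_nhds hx] with y hy
    rw [pdW_eq_fderivA hy]
  rw [he.fderiv_eq, (hasFDerivAt_apply_const (diffAt_fderivA hφ2 hx) v).fderiv]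
  rfl

lemma contOn_f1A (hφ2 : ContDiffOn ℝ 2 φ UA) :
    ContinuousOn (fderivWithin ℝ φ UA) UA :=
  hφ2.continuousOn_fderivWithin uniqueDiffOn_UA (by norm_num)

lemma contOn_f2A (hφ2 : ContDiffOn ℝ 2 φ UA) :
    ContinuousOn (fderivWithin ℝ (fderivWithin ℝ φ UA) UA) UA :=
  (hφ2.fderivWithin uniqueDiffOn_UA (le_refl 2)).continuousOn_fderivWithin uniqueDiffOn_UA le_rfl

end interiorA

section interiorB

variable {φ : (ℝ×ℝ)×ℝ → ℝ}

lemma pdW_eq_fderivB {x : (ℝ×ℝ)×ℝ} (hx : x ∈ lowerHalf) :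
    fderivWithin ℝ φ UB x = fderiv ℝ φ x := fderivWithin_of_mem_nhds (UB_mem_nhds hx)

lemma pdW2_eq_fderivB {x : (ℝ×ℝ)×ℝ} (hx : x ∈ lowerHalf) :
    fderivWithin ℝ (fderivWithin ℝ φ UB) UB x = fderiv ℝ (fderiv ℝ φ) x := by
  rw [fderivWithin_of_mem_nhds (UB_mem_nhds hx)]
  apply Filter.EventuallyEq.fderiv_eq
  filter_upwards [isOpen_lowerHalf.mem_nhds hx] with y hy
  exact pdW_eq_fderivB hy

lemma diffAtB (hφ2 : ContDiffOn ℝ 2 φ UB) {x : (ℝ×ℝ)×ℝ} (hx : x ∈ lowerHalf) :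
    DifferentiableAt ℝ φ x :=
  (hφ2.contDiffAt (UB_mem_nhds hx)).differentiableAt (by norm_num)

lemma diffAt_fderivB (hφ2 : ContDiffOn ℝ 2 φ UB) {x : (ℝ×ℝ)×ℝ} (hx : x ∈ lowerHalf) :
    DifferentiableAt ℝ (fderiv ℝ φ) x :=
  ((hφ2.contDiffAt (UB_mem_nhds hx)).fderiv_right (m := 1) (by norm_num)).differentiableAt one_ne_zero

lemma pdWpdW_eqB (hφ2 : ContDiffOn ℝ 2 φ UB) {x : (ℝ×ℝ)×ℝ} (hx : x ∈ lowerHalf)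
    (v : (ℝ×ℝ)×ℝ) :
    pdW UB v (pdW UB v φ) x = fderiv ℝ (fderiv ℝ φ) x v v := by
  show fderivWithin ℝ (fun y => fderivWithin ℝ φ UB y v) UB x v = _
  rw [fderivWithin_of_mem_nhds (UB_mem_nhds hx)]
  have he : (fun y => fderivWithin ℝ φ UB y v) =ᶠ[nhds x] (fun y => fderiv ℝ φ y v) := by
    filter_upwards [isOpen_lowerHalf.mem_nhds hx] with y hy
    rw [pdW_eq_fderivB hy]
  rw [he.fderiv_eq, (hasFDerivAt_apply_const (diffAt_fderivB hφ2 hx) v).fderiv]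
  rfl

lemma contOn_f1B (hφ2 : ContDiffOn ℝ 2 φ UB) :
    ContinuousOn (fderivWithin ℝ φ UB) UB :=
  hφ2.continuousOn_fderivWithin uniqueDiffOn_UB (by norm_num)

lemma contOn_f2B (hφ2 : ContDiffOn ℝ 2 φ UB) :
    ContinuousOn (fderivWithin ℝ (fderivWithin ℝ φ UB) UB) UB :=
  (hφ2.fderivWithin uniqueDiffOn_UB (le_refl 2)).continuousOn_fderivWithin uniqueDiffOn_UB le_rfl

end interiorB

section interiorH

variable {ψ : ℝ×ℝ → ℝ}

lemma pdHpdH_eq (hψ : ContDiff ℝ 2 ψ) (x : ℝ×ℝ) (v : ℝ×ℝ) :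
    pdH v (pdH v ψ) x = fderiv ℝ (fderiv ℝ ψ) x v v := by
  show fderiv ℝ (fun y => fderiv ℝ ψ y v) x v = _
  have hd : DifferentiableAt ℝ (fderiv ℝ ψ) x :=
    ((hψ.fderiv_right (m := 1) (by norm_num)).differentiable one_ne_zero) x
  rw [(hasFDerivAt_apply_const hd v).fderiv]
  rfl

end interiorH

section decayArith

lemma decay_mono {C n1 n2 : ℝ} (hC : 0 ≤ C) (h1 : 0 ≤ n1) (h : n1 ≤ n2) :
    C / (1 + n2)^4 ≤ C / (1 + n1)^4 := by
  have h2 : (0:ℝ) < (1 + n1)^4 := by positivity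
  gcongr <;> linarith

lemma mul_le_decay {a b C P : ℝ} (hP : 1 ≤ P) (hC : 0 ≤ C) (ha : |a| ≤ C / P) (hb : |b| ≤ C / P) :
    |a * b| ≤ C^2 / P := by
  have hP0 : (0:ℝ) < P := lt_of_lt_of_le one_pos hP
  have e0 : |a * b| = |a| * |b| := abs_mul a b
  have e1 : |a| * |b| ≤ (C/P) * (C/P) := mul_le_mul ha hb (abs_nonneg b) (div_nonneg hC hP0.le)
  have e2 : (C/P) * (C/P) = C^2/(P*P) := by rw [div_mul_div_comm]; ring_nf
  have e3 : C^2/(P*P) ≤ C^2/P := by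
    rw [div_le_div_iff₀ (by nlinarith) hP0]
    nlinarith [mul_nonneg (mul_nonneg (sq_nonneg C) hP0.le) (sub_nonneg.mpr hP)]
  calc |a * b| = |a| * |b| := e0
    _ ≤ C/P * (C/P) := e1
    _ = C^2/(P*P) := e2
    _ ≤ C^2/P := e3

lemma abs_le_of_add4 {a b c d D : ℝ} (hb : 0 ≤ b) (hc : 0 ≤ c) (hd : 0 ≤ d)
    (h : |a| + b + c + d ≤ D) : |a| ≤ D := by linarith

lemma bound_nonneg {f : (ℝ×ℝ)×ℝ → ℝ} {C : ℝ}
    (hb : |f 0| ≤ C / (1 + ‖(0 : (ℝ×ℝ)×ℝ)‖)^4) : 0 ≤ C := by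
  simp only [norm_zero, add_zero, one_pow, div_one] at hb
  exact le_trans (abs_nonneg _) hb

end decayArith

section ibp2D

variable {ψ : ℝ×ℝ → ℝ} {C : ℝ}

/-- pointwise data for the 2D integrand in direction `v` -/
noncomputable def D2v (ψ : ℝ×ℝ → ℝ) (v : ℝ×ℝ) (x : ℝ×ℝ) : ℝ :=
  ψ x * (fderiv ℝ (fderiv ℝ ψ) x v v) + (fderiv ℝ ψ x v)^2

lemma D2v_bound (hC : 0 ≤ C)
    (hb : ∀ x : ℝ×ℝ, |ψ x| + ‖fderiv ℝ ψ x‖ + ‖fderiv ℝ (fderiv ℝ ψ) x‖ ≤ C / (1+‖x‖)^4)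
    {v : ℝ×ℝ} (hv : ‖v‖ ≤ 1) (x : ℝ×ℝ) :
    |D2v ψ v x| ≤ 2*C^2 / (1+‖x‖)^4 := by
  have hP : (1:ℝ) ≤ (1+‖x‖)^4 := one_le_pow₀ (one_le_onePlus x)
  have h := hb x
  have h1 : |ψ x| ≤ C / (1+‖x‖)^4 := by
    have := norm_nonneg (fderiv ℝ ψ x); have := norm_nonneg (fderiv ℝ (fderiv ℝ ψ) x); linarith
  have h2 : ‖fderiv ℝ ψ x‖ ≤ C / (1+‖x‖)^4 := by
    have := abs_nonneg (ψ x); have := norm_nonneg (fderiv ℝ (fderiv ℝ ψ) x); linarith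
  have h3 : ‖fderiv ℝ (fderiv ℝ ψ) x‖ ≤ C / (1+‖x‖)^4 := by
    have := abs_nonneg (ψ x); have := norm_nonneg (fderiv ℝ ψ x); linarith
  have hfv : |fderiv ℝ ψ x v| ≤ C / (1+‖x‖)^4 := by
    calc |fderiv ℝ ψ x v| ≤ ‖fderiv ℝ ψ x‖ * ‖v‖ := (fderiv ℝ ψ x).le_opNorm v
      _ ≤ (C / (1+‖x‖)^4) * 1 := by
          apply mul_le_mul h2 hv (norm_nonneg v)
          exact le_trans (norm_nonneg _) h2
      _ = C / (1+‖x‖)^4 := mul_one _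
  have hfvv : |fderiv ℝ (fderiv ℝ ψ) x v v| ≤ C / (1+‖x‖)^4 := by
    have e1 : ‖fderiv ℝ (fderiv ℝ ψ) x v v‖ ≤ ‖fderiv ℝ (fderiv ℝ ψ) x v‖ * ‖v‖ :=
      (fderiv ℝ (fderiv ℝ ψ) x v).le_opNorm v
    have e2 : ‖fderiv ℝ (fderiv ℝ ψ) x v‖ ≤ ‖fderiv ℝ (fderiv ℝ ψ) x‖ * ‖v‖ :=
      (fderiv ℝ (fderiv ℝ ψ) x).le_opNorm v
    have hv0 : (0:ℝ) ≤ ‖v‖ := norm_nonneg v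
    have h0 := norm_nonneg (fderiv ℝ (fderiv ℝ ψ) x v)
    have h00 := norm_nonneg (fderiv ℝ (fderiv ℝ ψ) x)
    have key : ‖fderiv ℝ (fderiv ℝ ψ) x v v‖ ≤ ‖fderiv ℝ (fderiv ℝ ψ) x‖ := by
      nlinarith [mul_le_mul_of_nonneg_left hv h0, mul_le_mul_of_nonneg_left hv h00]
    exact le_trans key h3
  have t1 : |ψ x * (fderiv ℝ (fderiv ℝ ψ) x v v)| ≤ C^2/(1+‖x‖)^4 :=
    mul_le_decay hP hC h1 hfvv
  have t2 : |(fderiv ℝ ψ x v)^2| ≤ C^2/(1+‖x‖)^4 := by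
    have e : (fderiv ℝ ψ x v)^2 = fderiv ℝ ψ x v * fderiv ℝ ψ x v := sq (fderiv ℝ ψ x v)
    rw [e]
    exact mul_le_decay hP hC hfv hfv
  calc |D2v ψ v x| ≤ |ψ x * (fderiv ℝ (fderiv ℝ ψ) x v v)| + |(fderiv ℝ ψ x v)^2| := abs_add_le _ _
    _ ≤ 2*C^2/(1+‖x‖)^4 := by rw [show (2:ℝ)*C^2 = C^2 + C^2 by ring, add_div]; linarith

lemma D2v_continuous (hψ : ContDiff ℝ 2 ψ) (v : ℝ×ℝ) : Continuous (D2v ψ v) := by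
  have hc1 : Continuous (fderiv ℝ ψ) := (hψ.fderiv_right (m := 1) (by norm_num)).continuous
  have hc2 : Continuous (fderiv ℝ (fderiv ℝ ψ)) :=
    (hψ.fderiv_right (m := 1) (by norm_num)).continuous_fderiv one_ne_zero
  have e1 : Continuous fun x => fderiv ℝ ψ x v := hc1.clm_apply continuous_const
  have e2 : Continuous fun x => fderiv ℝ (fderiv ℝ ψ) x v v :=
    (hc2.clm_apply continuous_const).clm_apply continuous_const
  exact ((hψ.continuous.mul e2).add (e1.pow 2))

lemma D2v_integrable (hψ : ContDiff ℝ 2 ψ) (hC : 0 ≤ C)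
    (hb : ∀ x : ℝ×ℝ, |ψ x| + ‖fderiv ℝ ψ x‖ + ‖fderiv ℝ (fderiv ℝ ψ) x‖ ≤ C / (1+‖x‖)^4)
    {v : ℝ×ℝ} (hv : ‖v‖ ≤ 1) :
    MeasureTheory.Integrable (D2v ψ v) := by
  refine (integrable_decay2 (2*C^2)).mono' ((D2v_continuous hψ v).aestronglyMeasurable) ?_
  exact Filter.Eventually.of_forall fun x => D2v_bound hC hb hv x
section clmArith

variable {E : Type*} [NormedAddCommGroup E] [NormedSpace ℝ E]

lemma clm_apply_le {L : E →L[ℝ] ℝ} {D : ℝ} (h : ‖L‖ ≤ D) {v : E} (hv : ‖v‖ ≤ 1) :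
    |L v| ≤ D := by
  have h1 : |L v| ≤ ‖L‖ * ‖v‖ := L.le_opNorm v
  have h2 : ‖L‖ * ‖v‖ ≤ D * 1 :=
    mul_le_mul h hv (norm_nonneg v) (le_trans (norm_nonneg L) h)
  linarith

lemma clm2_apply_le {A : E →L[ℝ] E →L[ℝ] ℝ} {D : ℝ} (h : ‖A‖ ≤ D) {v w : E}
    (hv : ‖v‖ ≤ 1) (hw : ‖w‖ ≤ 1) :
    |A v w| ≤ D := by
  have h1 : |A v w| ≤ ‖A v‖ * ‖w‖ := (A v).le_opNorm w
  have h2 : ‖A v‖ ≤ ‖A‖ * ‖v‖ := A.le_opNorm v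
  have h3 : ‖A‖ * ‖v‖ ≤ D * 1 :=
    mul_le_mul h hv (norm_nonneg v) (le_trans (norm_nonneg A) h)
  have h4 : ‖A v‖ * ‖w‖ ≤ (D*1) * 1 := by
    apply mul_le_mul (le_trans h2 h3) hw (norm_nonneg w)
    have := norm_nonneg (A v); linarith [le_trans h2 h3]
  linarith

lemma split3 {a b c D : ℝ} (h : a + b + c ≤ D) (ha : 0 ≤ a) (hb : 0 ≤ b) (hc : 0 ≤ c) :
    a ≤ D ∧ b ≤ D ∧ c ≤ D := ⟨by linarith, by linarith, by linarith⟩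

end clmArith

section ibp2Dmain

variable {ψ : ℝ×ℝ → ℝ} {C : ℝ}

lemma norm_v10 : ‖(((1:ℝ),(0:ℝ)) : ℝ×ℝ)‖ = 1 := by simp [Prod.norm_def]
lemma norm_v01 : ‖(((0:ℝ),(1:ℝ)) : ℝ×ℝ)‖ = 1 := by simp [Prod.norm_def]

lemma ibp2D (hψ : ContDiff ℝ 2 ψ) (hC : 0 ≤ C)
    (hb : ∀ x : ℝ×ℝ, |ψ x| + ‖fderiv ℝ ψ x‖ + ‖fderiv ℝ (fderiv ℝ ψ) x‖ ≤ C / (1+‖x‖)^4) :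
    ∫ x : ℝ×ℝ, (ψ x * lapH ψ x + gradSqH ψ x) = 0 := by
  have hsplit : ∀ x : ℝ×ℝ, |ψ x| ≤ C / (1+‖x‖)^4 ∧ ‖fderiv ℝ ψ x‖ ≤ C / (1+‖x‖)^4 ∧
      ‖fderiv ℝ (fderiv ℝ ψ) x‖ ≤ C / (1+‖x‖)^4 := fun x =>
    split3 (hb x) (abs_nonneg _) (norm_nonneg _) (ContinuousLinearMap.opNorm_nonneg _)
  -- pointwise identity
  have hpt : ∀ x : ℝ×ℝ, ψ x * lapH ψ x + gradSqH ψ x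
      = D2v ψ (1,0) x + D2v ψ (0,1) x := by
    intro x
    unfold lapH gradSqH D2v
    rw [pdHpdH_eq hψ x (1,0), pdHpdH_eq hψ x (0,1)]
    unfold pdH
    ring
  have hi1 : MeasureTheory.Integrable (D2v ψ (1,0)) :=
    D2v_integrable hψ hC hb (le_of_eq norm_v10)
  have hi2 : MeasureTheory.Integrable (D2v ψ (0,1)) :=
    D2v_integrable hψ hC hb (le_of_eq norm_v01)
  rw [MeasureTheory.integral_congr_ae (Filter.Eventually.of_forall hpt),
    MeasureTheory.integral_add hi1 hi2]
  -- vanishing of each directional term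
  have hd2 : ∀ x : ℝ×ℝ, DifferentiableAt ℝ (fderiv ℝ ψ) x := fun x =>
    ((hψ.fderiv_right (m := 1) (by norm_num)).differentiable one_ne_zero) x
  have hdψ : ∀ x : ℝ×ℝ, DifferentiableAt ℝ ψ x := fun x =>
    (hψ.differentiable (by norm_num)) x
  have hcψ : Continuous ψ := hψ.continuous
  have hc1 : Continuous (fderiv ℝ ψ) := (hψ.fderiv_right (m := 1) (by norm_num)).continuous
  -- term 1
  have T1 : ∫ x : ℝ×ℝ, D2v ψ (1,0) x = 0 := by
    have hint : MeasureTheory.Integrable (D2v ψ (1,0))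
        ((volume : MeasureTheory.Measure ℝ).prod (volume : MeasureTheory.Measure ℝ)) := by
      rw [← MeasureTheory.Measure.volume_eq_prod]; exact hi1
    rw [MeasureTheory.Measure.volume_eq_prod, MeasureTheory.integral_prod_symm _ hint]
    have inner0 : ∀ b : ℝ, ∫ a : ℝ, D2v ψ (1,0) (a, b) = 0 := by
      intro b
      apply MeasureTheory.integral_eq_zero_of_hasDerivAt_of_integrable
        (f := fun a => ψ (a,b) * fderiv ℝ ψ (a,b) (1,0))
      · intro a
        have h1 : HasDerivAt (fun r => ψ (r,b)) (fderiv ℝ ψ (a,b) (1,0)) a :=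
          hasDerivAt_h1 (hdψ (a,b)).hasFDerivAt
        have h2 : HasDerivAt (fun r => fderiv ℝ ψ (r,b) (1,0))
            (fderiv ℝ (fderiv ℝ ψ) (a,b) (1,0) (1,0)) a :=
          hasDerivAt_h1 (hasFDerivAt_apply_const (hd2 (a,b)) (1,0))
        have := h1.mul h2
        exact this.congr_deriv (by unfold D2v; ring)
      · -- integrable D2v slice
        refine (integrable_decay1 (2*C^2)).mono' ?_ ?_
        · exact ((D2v_continuous hψ (1,0)).comp (continuous_id.prodMk continuous_const)).aestronglyMeasurable
        · refine Filter.Eventually.of_forall fun a => ?_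
          calc ‖D2v ψ (1,0) (a,b)‖ ≤ 2*C^2 / (1+‖((a:ℝ),(b:ℝ))‖)^4 :=
                D2v_bound hC hb (le_of_eq norm_v10) (a,b)
            _ ≤ 2*C^2 / (1+‖a‖)^4 := decay_mono (by positivity) (norm_nonneg a)
                (norm_fst_le ((a,b) : ℝ×ℝ))
      · -- integrable w slice
        refine (integrable_decay1 (C^2)).mono' ?_ ?_
        · exact ((hcψ.mul (hc1.clm_apply continuous_const)).comp
            (continuous_id.prodMk continuous_const)).aestronglyMeasurable
        · refine Filter.Eventually.of_forall fun a => ?_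
          have hP : (1:ℝ) ≤ (1+‖a‖)^4 := one_le_pow₀ (one_le_onePlus a)
          have e1 : |ψ (a,b)| ≤ C / (1+‖a‖)^4 :=
            le_trans (hsplit (a,b)).1 (decay_mono hC (norm_nonneg a) (norm_fst_le ((a,b):ℝ×ℝ)))
          have e2 : |fderiv ℝ ψ (a,b) (1,0)| ≤ C / (1+‖a‖)^4 :=
            le_trans (clm_apply_le (hsplit (a,b)).2.1 (le_of_eq norm_v10))
              (decay_mono hC (norm_nonneg a) (norm_fst_le ((a,b):ℝ×ℝ)))
          exact mul_le_decay hP hC e1 e2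
    rw [MeasureTheory.integral_congr_ae (Filter.Eventually.of_forall inner0)]
    simp
  -- term 2
  have T2 : ∫ x : ℝ×ℝ, D2v ψ (0,1) x = 0 := by
    have hint : MeasureTheory.Integrable (D2v ψ (0,1))
        ((volume : MeasureTheory.Measure ℝ).prod (volume : MeasureTheory.Measure ℝ)) := by
      rw [← MeasureTheory.Measure.volume_eq_prod]; exact hi2
    rw [MeasureTheory.Measure.volume_eq_prod, MeasureTheory.integral_prod _ hint]
    have inner0 : ∀ a : ℝ, ∫ b : ℝ, D2v ψ (0,1) (a, b) = 0 := by
      intro a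
      apply MeasureTheory.integral_eq_zero_of_hasDerivAt_of_integrable
        (f := fun b => ψ (a,b) * fderiv ℝ ψ (a,b) (0,1))
      · intro b
        have h1 : HasDerivAt (fun r => ψ (a,r)) (fderiv ℝ ψ (a,b) (0,1)) b :=
          hasDerivAt_h2 (hdψ (a,b)).hasFDerivAt
        have h2 : HasDerivAt (fun r => fderiv ℝ ψ (a,r) (0,1))
            (fderiv ℝ (fderiv ℝ ψ) (a,b) (0,1) (0,1)) b :=
          hasDerivAt_h2 (hasFDerivAt_apply_const (hd2 (a,b)) (0,1))
        have := h1.mul h2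
        exact this.congr_deriv (by unfold D2v; ring)
      · refine (integrable_decay1 (2*C^2)).mono' ?_ ?_
        · exact ((D2v_continuous hψ (0,1)).comp (continuous_const.prodMk continuous_id)).aestronglyMeasurable
        · refine Filter.Eventually.of_forall fun b => ?_
          calc ‖D2v ψ (0,1) (a,b)‖ ≤ 2*C^2 / (1+‖((a:ℝ),(b:ℝ))‖)^4 :=
                D2v_bound hC hb (le_of_eq norm_v01) (a,b)
            _ ≤ 2*C^2 / (1+‖b‖)^4 := decay_mono (by positivity) (norm_nonneg b)
                (norm_snd_le ((a,b) : ℝ×ℝ))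
      · refine (integrable_decay1 (C^2)).mono' ?_ ?_
        · exact ((hcψ.mul (hc1.clm_apply continuous_const)).comp
            (continuous_const.prodMk continuous_id)).aestronglyMeasurable
        · refine Filter.Eventually.of_forall fun b => ?_
          have hP : (1:ℝ) ≤ (1+‖b‖)^4 := one_le_pow₀ (one_le_onePlus b)
          have e1 : |ψ (a,b)| ≤ C / (1+‖b‖)^4 :=
            le_trans (hsplit (a,b)).1 (decay_mono hC (norm_nonneg b) (norm_snd_le ((a,b):ℝ×ℝ)))
          have e2 : |fderiv ℝ ψ (a,b) (0,1)| ≤ C / (1+‖b‖)^4 :=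
            le_trans (clm_apply_le (hsplit (a,b)).2.1 (le_of_eq norm_v01))
              (decay_mono hC (norm_nonneg b) (norm_snd_le ((a,b):ℝ×ℝ)))
          exact mul_le_decay hP hC e1 e2
    rw [MeasureTheory.integral_congr_ae (Filter.Eventually.of_forall inner0)]
    simp
  rw [T1, T2]; ring

end ibp2Dmain
section ibpHalfA

variable {φ : (ℝ×ℝ)×ℝ → ℝ} {C : ℝ}

noncomputable def EvA (φ : (ℝ×ℝ)×ℝ → ℝ) (v x : (ℝ×ℝ)×ℝ) : ℝ :=
  φ x * (fderivWithin ℝ (fderivWithin ℝ φ UA) UA x v v) + (fderivWithin ℝ φ UA x v)^2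

noncomputable def DvI (φ : (ℝ×ℝ)×ℝ → ℝ) (v x : (ℝ×ℝ)×ℝ) : ℝ :=
  φ x * (fderiv ℝ (fderiv ℝ φ) x v v) + (fderiv ℝ φ x v)^2

lemma core_bound {E : Type*} [NormedAddCommGroup E] [NormedSpace ℝ E]
    {P C p : ℝ} {L : E →L[ℝ] ℝ} {A : E →L[ℝ] E →L[ℝ] ℝ}
    (hP : 1 ≤ P) (hC : 0 ≤ C) (h1 : |p| ≤ C/P) (h2 : ‖L‖ ≤ C/P) (h3 : ‖A‖ ≤ C/P)
    {v : E} (hv : ‖v‖ ≤ 1) : |p * (A v v) + (L v)^2| ≤ 2*C^2/P := by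
  have hAvv : |A v v| ≤ C/P := clm2_apply_le h3 hv hv
  have hLv : |L v| ≤ C/P := clm_apply_le h2 hv
  have t1 : |p * (A v v)| ≤ C^2/P := mul_le_decay hP hC h1 hAvv
  have t2 : |(L v)^2| ≤ C^2/P := by rw [sq (L v)]; exact mul_le_decay hP hC hLv hLv
  calc |p * (A v v) + (L v)^2| ≤ |p * (A v v)| + |(L v)^2| := abs_add_le _ _
    _ ≤ 2*C^2/P := by rw [show (2:ℝ)*C^2 = C^2 + C^2 by ring, add_div]; linarith

lemma EvA_bound (hC : 0 ≤ C)
    (hb : ∀ x ∈ UA, |φ x| + ‖fderivWithin ℝ φ UA x‖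
      + ‖fderivWithin ℝ (fderivWithin ℝ φ UA) UA x‖ ≤ C / (1+‖x‖)^4)
    {v : (ℝ×ℝ)×ℝ} (hv : ‖v‖ ≤ 1) {x : (ℝ×ℝ)×ℝ} (hx : x ∈ UA) :
    |EvA φ v x| ≤ 2*C^2 / (1+‖x‖)^4 := by
  obtain ⟨h1, h2, h3⟩ := split3 (hb x hx) (abs_nonneg _) (norm_nonneg _) (ContinuousLinearMap.opNorm_nonneg _)
  exact core_bound (one_le_pow₀ (one_le_onePlus x)) hC h1 h2 h3 hv

lemma EvA_contOn (hφ : ContDiffOn ℝ 2 φ UA) (v : (ℝ×ℝ)×ℝ) :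
    ContinuousOn (EvA φ v) UA :=
  (hφ.continuousOn.mul (((contOn_f2A hφ).clm_apply continuousOn_const).clm_apply
    continuousOn_const)).add (((contOn_f1A hφ).clm_apply continuousOn_const).pow 2)

lemma EvA_eq_DvI {x : (ℝ×ℝ)×ℝ} (hx : x ∈ upperHalf) (v : (ℝ×ℝ)×ℝ) :
    EvA φ v x = DvI φ v x := by
  unfold EvA DvI; rw [pdW_eq_fderivA hx, pdW2_eq_fderivA hx]

lemma EvA_intOn (hφ : ContDiffOn ℝ 2 φ UA) (hC : 0 ≤ C)
    (hb : ∀ x ∈ UA, |φ x| + ‖fderivWithin ℝ φ UA x‖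
      + ‖fderivWithin ℝ (fderivWithin ℝ φ UA) UA x‖ ≤ C / (1+‖x‖)^4)
    {v : (ℝ×ℝ)×ℝ} (hv : ‖v‖ ≤ 1) :
    MeasureTheory.IntegrableOn (EvA φ v) upperHalf := by
  refine ((integrable_decay3 (2*C^2)).restrict).mono' ?_ ?_
  · exact ((EvA_contOn hφ v).mono upperHalf_subset_UA).aestronglyMeasurable measurableSet_upperHalf
  · filter_upwards [MeasureTheory.ae_restrict_mem measurableSet_upperHalf] with x hx
    exact EvA_bound hC hb hv (upperHalf_subset_UA hx)

lemma DvI_intOnA (hφ : ContDiffOn ℝ 2 φ UA) (hC : 0 ≤ C)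
    (hb : ∀ x ∈ UA, |φ x| + ‖fderivWithin ℝ φ UA x‖
      + ‖fderivWithin ℝ (fderivWithin ℝ φ UA) UA x‖ ≤ C / (1+‖x‖)^4)
    {v : (ℝ×ℝ)×ℝ} (hv : ‖v‖ ≤ 1) :
    MeasureTheory.IntegrableOn (DvI φ v) upperHalf :=
  (EvA_intOn hφ hC hb hv).congr_fun (fun x hx => EvA_eq_DvI hx v) measurableSet_upperHalf

lemma restrict_upperHalf_eq :
    (volume : MeasureTheory.Measure ((ℝ×ℝ)×ℝ)).restrict upperHalf
      = ((volume : MeasureTheory.Measure (ℝ×ℝ)).prod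
          ((volume : MeasureTheory.Measure ℝ).restrict (Set.Ioi 0))) := by
  rw [upperHalf_eq, MeasureTheory.Measure.volume_eq_prod,
    ← MeasureTheory.Measure.prod_restrict, MeasureTheory.Measure.restrict_univ]

lemma lineV_contA (xh : ℝ×ℝ) : Continuous (fun s : ℝ => ((xh, s) : (ℝ×ℝ)×ℝ)) :=
  continuous_const.prodMk continuous_id

lemma lineV_mapsToA (xh : ℝ×ℝ) : Set.MapsTo (fun s : ℝ => ((xh, s) : (ℝ×ℝ)×ℝ)) (Set.Ici 0) UA :=
  fun s hs => (hs : (0:ℝ) ≤ s)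

/-- Vertical part: `∫_{ℝ³₊} D3 = -∫_{ℝ²} φ(xh,0) ∂₃φ(xh,0)`. -/
lemma vertA (hφ : ContDiffOn ℝ 2 φ UA) (hC : 0 ≤ C)
    (hb : ∀ x ∈ UA, |φ x| + ‖fderivWithin ℝ φ UA x‖
      + ‖fderivWithin ℝ (fderivWithin ℝ φ UA) UA x‖ ≤ C / (1+‖x‖)^4) :
    ∫ x in upperHalf, DvI φ e3 x
      = - ∫ xh : ℝ×ℝ, φ (xh,0) * (fderivWithin ℝ φ UA (xh,0)) e3 := by
  have hsplit : ∀ x ∈ UA, |φ x| ≤ C / (1+‖x‖)^4 ∧ ‖fderivWithin ℝ φ UA x‖ ≤ C / (1+‖x‖)^4 ∧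
      ‖fderivWithin ℝ (fderivWithin ℝ φ UA) UA x‖ ≤ C / (1+‖x‖)^4 := fun x hx =>
    split3 (hb x hx) (abs_nonneg _) (norm_nonneg _) (ContinuousLinearMap.opNorm_nonneg _)
  have hint3 : MeasureTheory.Integrable (DvI φ e3)
      ((volume : MeasureTheory.Measure (ℝ×ℝ)).prod
        ((volume : MeasureTheory.Measure ℝ).restrict (Set.Ioi 0))) := by
    rw [← restrict_upperHalf_eq]; exact DvI_intOnA hφ hC hb norm_e3.le
  have inner : ∀ xh : ℝ×ℝ, ∫ s in Set.Ioi (0:ℝ), DvI φ e3 (xh,s)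
      = -(φ (xh,0) * (fderivWithin ℝ φ UA (xh,0)) e3) := by
    intro xh
    set u : ℝ → ℝ := fun s => φ (xh,s) * (fderivWithin ℝ φ UA (xh,s)) e3 with hu
    have hcont : ContinuousWithinAt u (Set.Ici 0) 0 := by
      have h1 : ContinuousOn u (Set.Ici 0) :=
        ((hφ.continuousOn.comp (lineV_contA xh).continuousOn (lineV_mapsToA xh)).mul
          (((contOn_f1A hφ).clm_apply continuousOn_const).comp
            (lineV_contA xh).continuousOn (lineV_mapsToA xh)))
      exact h1 _ Set.self_mem_Ici
    have hderiv : ∀ s ∈ Set.Ioi (0:ℝ), HasDerivAt u (DvI φ e3 (xh,s)) s := by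
      intro s hs
      have hx : ((xh,s) : (ℝ×ℝ)×ℝ) ∈ upperHalf := hs
      have h1 : HasDerivAt (fun r => φ (xh,r)) (fderiv ℝ φ (xh,s) e3) s :=
        hasDerivAt_vert (diffAtA hφ hx).hasFDerivAt
      have h2 : HasDerivAt (fun r => fderiv ℝ φ (xh,r) e3)
          (fderiv ℝ (fderiv ℝ φ) (xh,s) e3 e3) s :=
        hasDerivAt_vert (hasFDerivAt_apply_const (diffAt_fderivA hφ hx) e3)
      have hw : HasDerivAt (fun r => φ (xh,r) * fderiv ℝ φ (xh,r) e3) (DvI φ e3 (xh,s)) s := by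
        have := h1.mul h2; exact this.congr_deriv (by unfold DvI; ring)
      refine hw.congr_of_eventuallyEq ?_
      filter_upwards [isOpen_Ioi.mem_nhds hs] with r hr
      show u r = φ (xh,r) * fderiv ℝ φ (xh,r) e3
      rw [hu]; simp only
      rw [pdW_eq_fderivA (show ((xh,r) : (ℝ×ℝ)×ℝ) ∈ upperHalf from hr)]
    have hintio : MeasureTheory.IntegrableOn (fun s => DvI φ e3 (xh,s)) (Set.Ioi 0) := by
      refine ((integrable_decay1 (2*C^2)).restrict).mono' ?_ ?_
      · have hc : ContinuousOn (fun s : ℝ => EvA φ e3 (xh,s)) (Set.Ioi 0) :=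
          (EvA_contOn hφ e3).comp (lineV_contA xh).continuousOn
            (fun s hs => (le_of_lt hs : (0:ℝ) ≤ s))
        have hc2 : ContinuousOn (fun s : ℝ => DvI φ e3 (xh,s)) (Set.Ioi 0) :=
          hc.congr (fun s hs => (EvA_eq_DvI (show ((xh,s):(ℝ×ℝ)×ℝ) ∈ upperHalf from hs) e3).symm)
        exact hc2.aestronglyMeasurable measurableSet_Ioi
      · filter_upwards [MeasureTheory.ae_restrict_mem measurableSet_Ioi] with s hs
        rw [show DvI φ e3 (xh,s) = EvA φ e3 (xh,s) from
          (EvA_eq_DvI (show ((xh,s):(ℝ×ℝ)×ℝ) ∈ upperHalf from hs) e3).symm]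
        calc ‖EvA φ e3 (xh,s)‖ ≤ 2*C^2/(1+‖((xh,s) : (ℝ×ℝ)×ℝ)‖)^4 :=
              EvA_bound hC hb norm_e3.le (le_of_lt hs : (0:ℝ) ≤ s)
          _ ≤ 2*C^2/(1+‖s‖)^4 := decay_mono (by positivity) (norm_nonneg s)
              (norm_snd_le ((xh,s) : (ℝ×ℝ)×ℝ))
    have htend : Filter.Tendsto u Filter.atTop (nhds 0) := by
      apply squeeze_zero_norm' (a := fun s : ℝ => C^2/(1+‖s‖)^4)
      · filter_upwards [Filter.eventually_ge_atTop (0:ℝ)] with s hs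
        have hxU : ((xh,s) : (ℝ×ℝ)×ℝ) ∈ UA := hs
        obtain ⟨b1, b2, _⟩ := hsplit _ hxU
        have e1 : |φ (xh,s)| ≤ C/(1+‖s‖)^4 :=
          le_trans b1 (decay_mono hC (norm_nonneg s) (norm_snd_le ((xh,s) : (ℝ×ℝ)×ℝ)))
        have e2 : |(fderivWithin ℝ φ UA (xh,s)) e3| ≤ C/(1+‖s‖)^4 :=
          le_trans (clm_apply_le b2 norm_e3.le)
            (decay_mono hC (norm_nonneg s) (norm_snd_le ((xh,s) : (ℝ×ℝ)×ℝ)))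
        exact mul_le_decay (one_le_pow₀ (one_le_onePlus s)) hC e1 e2
      · apply Filter.Tendsto.div_atTop (tendsto_const_nhds)
        apply (Filter.tendsto_pow_atTop (by norm_num : (4:ℕ) ≠ 0)).comp
        apply tendsto_atTop_add_const_left _ 1
        show Filter.Tendsto (fun s : ℝ => ‖s‖) Filter.atTop Filter.atTop
        simp only [Real.norm_eq_abs]
        exact tendsto_abs_atTop_atTop
    have := MeasureTheory.integral_Ioi_of_hasDerivAt_of_tendsto hcont hderiv hintio htend
    rw [this, zero_sub]
  calc ∫ x in upperHalf, DvI φ e3 x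
      = ∫ x, DvI φ e3 x ∂((volume : MeasureTheory.Measure (ℝ×ℝ)).prod
          ((volume : MeasureTheory.Measure ℝ).restrict (Set.Ioi 0))) := by
        rw [← restrict_upperHalf_eq]
    _ = ∫ xh : ℝ×ℝ, ∫ s in Set.Ioi (0:ℝ), DvI φ e3 (xh,s) :=
        MeasureTheory.integral_prod _ hint3
    _ = ∫ xh : ℝ×ℝ, -(φ (xh,0) * (fderivWithin ℝ φ UA (xh,0)) e3) :=
        MeasureTheory.integral_congr_ae (Filter.Eventually.of_forall inner)
    _ = - ∫ xh : ℝ×ℝ, φ (xh,0) * (fderivWithin ℝ φ UA (xh,0)) e3 :=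
        MeasureTheory.integral_neg _

end ibpHalfA
section ibpHorizA

variable {φ : (ℝ×ℝ)×ℝ → ℝ} {C : ℝ}

lemma slice_contA (hφ : ContDiffOn ℝ 2 φ UA) (v : (ℝ×ℝ)×ℝ) {s : ℝ} (hs : 0 < s) :
    Continuous (fun xh : ℝ×ℝ => DvI φ v (xh,s)) := by
  have hfe : (fun xh : ℝ×ℝ => DvI φ v (xh,s)) = (fun xh : ℝ×ℝ => EvA φ v (xh,s)) := by
    funext xh
    exact (EvA_eq_DvI (show ((xh,s):(ℝ×ℝ)×ℝ) ∈ upperHalf from hs) v).symm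
  rw [hfe, ← continuousOn_univ]
  exact (EvA_contOn hφ v).comp (continuous_id.prodMk continuous_const).continuousOn
    (fun xh _ => (le_of_lt hs : (0:ℝ) ≤ s))

lemma slice_intA (hφ : ContDiffOn ℝ 2 φ UA) (hC : 0 ≤ C)
    (hb : ∀ x ∈ UA, |φ x| + ‖fderivWithin ℝ φ UA x‖
      + ‖fderivWithin ℝ (fderivWithin ℝ φ UA) UA x‖ ≤ C / (1+‖x‖)^4)
    {v : (ℝ×ℝ)×ℝ} (hv : ‖v‖ ≤ 1) {s : ℝ} (hs : 0 < s) :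
    MeasureTheory.Integrable (fun xh : ℝ×ℝ => DvI φ v (xh,s)) := by
  refine (integrable_decay2 (2*C^2)).mono' (slice_contA hφ v hs).aestronglyMeasurable ?_
  refine Filter.Eventually.of_forall fun xh => ?_
  rw [show DvI φ v (xh,s) = EvA φ v (xh,s) from
    (EvA_eq_DvI (show ((xh,s):(ℝ×ℝ)×ℝ) ∈ upperHalf from hs) v).symm]
  calc ‖EvA φ v (xh,s)‖ ≤ 2*C^2/(1+‖((xh,s) : (ℝ×ℝ)×ℝ)‖)^4 :=
        EvA_bound hC hb hv (le_of_lt hs)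
    _ ≤ 2*C^2/(1+‖xh‖)^4 := decay_mono (by positivity) (norm_nonneg xh)
        (norm_fst_le ((xh,s) : (ℝ×ℝ)×ℝ))

lemma lineH1_cont (b s : ℝ) : Continuous (fun a : ℝ => (((a,b),s) : (ℝ×ℝ)×ℝ)) :=
  (continuous_id.prodMk continuous_const).prodMk continuous_const
lemma lineH2_cont (a s : ℝ) : Continuous (fun b : ℝ => (((a,b),s) : (ℝ×ℝ)×ℝ)) :=
  (continuous_const.prodMk continuous_id).prodMk continuous_const

lemma horizA (hφ : ContDiffOn ℝ 2 φ UA) (hC : 0 ≤ C)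
    (hb : ∀ x ∈ UA, |φ x| + ‖fderivWithin ℝ φ UA x‖
      + ‖fderivWithin ℝ (fderivWithin ℝ φ UA) UA x‖ ≤ C / (1+‖x‖)^4) :
    (∫ x in upperHalf, DvI φ e1 x) = 0 ∧ (∫ x in upperHalf, DvI φ e2 x) = 0 := by
  have hsplit : ∀ x ∈ UA, |φ x| ≤ C / (1+‖x‖)^4 ∧ ‖fderivWithin ℝ φ UA x‖ ≤ C / (1+‖x‖)^4 ∧
      ‖fderivWithin ℝ (fderivWithin ℝ φ UA) UA x‖ ≤ C / (1+‖x‖)^4 := fun x hx =>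
    split3 (hb x hx) (abs_nonneg _) (norm_nonneg _) (ContinuousLinearMap.opNorm_nonneg _)
  constructor
  · -- direction e1
    have hint1 : MeasureTheory.Integrable (DvI φ e1)
        ((volume : MeasureTheory.Measure (ℝ×ℝ)).prod
          ((volume : MeasureTheory.Measure ℝ).restrict (Set.Ioi 0))) := by
      rw [← restrict_upperHalf_eq]; exact DvI_intOnA hφ hC hb norm_e1.le
    have h0 : ∀ s ∈ Set.Ioi (0:ℝ), (∫ xh : ℝ×ℝ, DvI φ e1 (xh,s)) = 0 := by
      intro s hs
      have hsl : MeasureTheory.Integrable (fun xh : ℝ×ℝ => DvI φ e1 (xh,s))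
          ((volume : MeasureTheory.Measure ℝ).prod (volume : MeasureTheory.Measure ℝ)) := by
        rw [← MeasureTheory.Measure.volume_eq_prod]; exact slice_intA hφ hC hb norm_e1.le hs
      rw [MeasureTheory.Measure.volume_eq_prod,
        MeasureTheory.integral_prod_symm _ hsl]
      have hin : ∀ b : ℝ, ∫ a : ℝ, DvI φ e1 ((a,b),s) = 0 := by
        intro b
        apply MeasureTheory.integral_eq_zero_of_hasDerivAt_of_integrable
          (f := fun a => φ ((a,b),s) * fderiv ℝ φ ((a,b),s) e1)
        · intro a
          have hx : (((a,b),s) : (ℝ×ℝ)×ℝ) ∈ upperHalf := hs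
          have h1 : HasDerivAt (fun r => φ ((r,b),s)) (fderiv ℝ φ ((a,b),s) e1) a :=
            hasDerivAt_horiz1 (diffAtA hφ hx).hasFDerivAt
          have h2 : HasDerivAt (fun r => fderiv ℝ φ ((r,b),s) e1)
              (fderiv ℝ (fderiv ℝ φ) ((a,b),s) e1 e1) a :=
            hasDerivAt_horiz1 (hasFDerivAt_apply_const (diffAt_fderivA hφ hx) e1)
          have := h1.mul h2; exact this.congr_deriv (by unfold DvI; ring)
        · -- integrable derivative slice
          refine (integrable_decay1 (2*C^2)).mono' ?_ ?_
          · exact ((slice_contA hφ e1 hs).comp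
              (continuous_id.prodMk continuous_const)).aestronglyMeasurable
          · refine Filter.Eventually.of_forall fun a => ?_
            rw [show DvI φ e1 ((a,b),s) = EvA φ e1 ((a,b),s) from
              (EvA_eq_DvI (show (((a,b),s):(ℝ×ℝ)×ℝ) ∈ upperHalf from hs) e1).symm]
            calc ‖EvA φ e1 ((a,b),s)‖ ≤ 2*C^2/(1+‖(((a,b),s) : (ℝ×ℝ)×ℝ)‖)^4 :=
                  EvA_bound hC hb norm_e1.le (le_of_lt hs : (0:ℝ) ≤ s)
              _ ≤ 2*C^2/(1+‖a‖)^4 := decay_mono (by positivity) (norm_nonneg a)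
                  (le_trans (norm_fst_le ((a,b) : ℝ×ℝ)) (norm_fst_le (((a,b),s) : (ℝ×ℝ)×ℝ)))
        · -- integrable function slice
          refine (integrable_decay1 (C^2)).mono' ?_ ?_
          · have hfe : (fun a : ℝ => φ ((a,b),s) * fderiv ℝ φ ((a,b),s) e1)
                = fun a : ℝ => φ ((a,b),s) * fderivWithin ℝ φ UA ((a,b),s) e1 := by
              funext a
              rw [pdW_eq_fderivA (show (((a,b),s):(ℝ×ℝ)×ℝ) ∈ upperHalf from hs)]
            rw [hfe]
            have hc : Continuous (fun a : ℝ =>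
                φ ((a,b),s) * fderivWithin ℝ φ UA ((a,b),s) e1) := by
              rw [← continuousOn_univ]
              exact ((hφ.continuousOn.mul ((contOn_f1A hφ).clm_apply continuousOn_const)).comp
                (lineH1_cont b s).continuousOn (fun a _ => (le_of_lt hs : (0:ℝ) ≤ s)))
            exact hc.aestronglyMeasurable
          · refine Filter.Eventually.of_forall fun a => ?_
            have hxU : (((a,b),s) : (ℝ×ℝ)×ℝ) ∈ UA := (le_of_lt hs : (0:ℝ) ≤ s)
            obtain ⟨b1, b2, _⟩ := hsplit _ hxU
            have hle : ‖a‖ ≤ ‖(((a,b),s) : (ℝ×ℝ)×ℝ)‖ :=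
              le_trans (norm_fst_le ((a,b) : ℝ×ℝ)) (norm_fst_le (((a,b),s) : (ℝ×ℝ)×ℝ))
            have e1' : |φ ((a,b),s)| ≤ C/(1+‖a‖)^4 :=
              le_trans b1 (decay_mono hC (norm_nonneg a) hle)
            have e2' : |fderiv ℝ φ ((a,b),s) e1| ≤ C/(1+‖a‖)^4 := by
              rw [← pdW_eq_fderivA (show (((a,b),s):(ℝ×ℝ)×ℝ) ∈ upperHalf from hs)]
              exact le_trans (clm_apply_le b2 norm_e1.le) (decay_mono hC (norm_nonneg a) hle)
            exact mul_le_decay (one_le_pow₀ (one_le_onePlus a)) hC e1' e2'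
      rw [MeasureTheory.integral_congr_ae (Filter.Eventually.of_forall hin)]
      simp
    rw [show (volume : MeasureTheory.Measure ((ℝ×ℝ)×ℝ)).restrict upperHalf
        = ((volume : MeasureTheory.Measure (ℝ×ℝ)).prod
          ((volume : MeasureTheory.Measure ℝ).restrict (Set.Ioi 0))) from restrict_upperHalf_eq,
      MeasureTheory.integral_prod_symm _ hint1]
    rw [MeasureTheory.setIntegral_congr_fun measurableSet_Ioi h0]
    simp
  · -- direction e2
    have hint2 : MeasureTheory.Integrable (DvI φ e2)
        ((volume : MeasureTheory.Measure (ℝ×ℝ)).prod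
          ((volume : MeasureTheory.Measure ℝ).restrict (Set.Ioi 0))) := by
      rw [← restrict_upperHalf_eq]; exact DvI_intOnA hφ hC hb norm_e2.le
    have h0 : ∀ s ∈ Set.Ioi (0:ℝ), (∫ xh : ℝ×ℝ, DvI φ e2 (xh,s)) = 0 := by
      intro s hs
      have hsl : MeasureTheory.Integrable (fun xh : ℝ×ℝ => DvI φ e2 (xh,s))
          ((volume : MeasureTheory.Measure ℝ).prod (volume : MeasureTheory.Measure ℝ)) := by
        rw [← MeasureTheory.Measure.volume_eq_prod]; exact slice_intA hφ hC hb norm_e2.le hs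
      rw [MeasureTheory.Measure.volume_eq_prod,
        MeasureTheory.integral_prod _ hsl]
      have hin : ∀ a : ℝ, ∫ b : ℝ, DvI φ e2 ((a,b),s) = 0 := by
        intro a
        apply MeasureTheory.integral_eq_zero_of_hasDerivAt_of_integrable
          (f := fun b => φ ((a,b),s) * fderiv ℝ φ ((a,b),s) e2)
        · intro b
          have hx : (((a,b),s) : (ℝ×ℝ)×ℝ) ∈ upperHalf := hs
          have h1 : HasDerivAt (fun r => φ ((a,r),s)) (fderiv ℝ φ ((a,b),s) e2) b :=
            hasDerivAt_horiz2 (diffAtA hφ hx).hasFDerivAt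
          have h2 : HasDerivAt (fun r => fderiv ℝ φ ((a,r),s) e2)
              (fderiv ℝ (fderiv ℝ φ) ((a,b),s) e2 e2) b :=
            hasDerivAt_horiz2 (hasFDerivAt_apply_const (diffAt_fderivA hφ hx) e2)
          have := h1.mul h2; exact this.congr_deriv (by unfold DvI; ring)
        · refine (integrable_decay1 (2*C^2)).mono' ?_ ?_
          · exact ((slice_contA hφ e2 hs).comp
              (continuous_const.prodMk continuous_id)).aestronglyMeasurable
          · refine Filter.Eventually.of_forall fun b => ?_
            rw [show DvI φ e2 ((a,b),s) = EvA φ e2 ((a,b),s) from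
              (EvA_eq_DvI (show (((a,b),s):(ℝ×ℝ)×ℝ) ∈ upperHalf from hs) e2).symm]
            calc ‖EvA φ e2 ((a,b),s)‖ ≤ 2*C^2/(1+‖(((a,b),s) : (ℝ×ℝ)×ℝ)‖)^4 :=
                  EvA_bound hC hb norm_e2.le (le_of_lt hs : (0:ℝ) ≤ s)
              _ ≤ 2*C^2/(1+‖b‖)^4 := decay_mono (by positivity) (norm_nonneg b)
                  (le_trans (norm_snd_le ((a,b) : ℝ×ℝ)) (norm_fst_le (((a,b),s) : (ℝ×ℝ)×ℝ)))
        · refine (integrable_decay1 (C^2)).mono' ?_ ?_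
          · have hfe : (fun b : ℝ => φ ((a,b),s) * fderiv ℝ φ ((a,b),s) e2)
                = fun b : ℝ => φ ((a,b),s) * fderivWithin ℝ φ UA ((a,b),s) e2 := by
              funext b
              rw [pdW_eq_fderivA (show (((a,b),s):(ℝ×ℝ)×ℝ) ∈ upperHalf from hs)]
            rw [hfe]
            have hc : Continuous (fun b : ℝ =>
                φ ((a,b),s) * fderivWithin ℝ φ UA ((a,b),s) e2) := by
              rw [← continuousOn_univ]
              exact ((hφ.continuousOn.mul ((contOn_f1A hφ).clm_apply continuousOn_const)).comp
                (lineH2_cont a s).continuousOn (fun b _ => (le_of_lt hs : (0:ℝ) ≤ s)))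
            exact hc.aestronglyMeasurable
          · refine Filter.Eventually.of_forall fun b => ?_
            have hxU : (((a,b),s) : (ℝ×ℝ)×ℝ) ∈ UA := (le_of_lt hs : (0:ℝ) ≤ s)
            obtain ⟨b1, b2, _⟩ := hsplit _ hxU
            have hle : ‖b‖ ≤ ‖(((a,b),s) : (ℝ×ℝ)×ℝ)‖ :=
              le_trans (norm_snd_le ((a,b) : ℝ×ℝ)) (norm_fst_le (((a,b),s) : (ℝ×ℝ)×ℝ))
            have e1' : |φ ((a,b),s)| ≤ C/(1+‖b‖)^4 :=
              le_trans b1 (decay_mono hC (norm_nonneg b) hle)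
            have e2' : |fderiv ℝ φ ((a,b),s) e2| ≤ C/(1+‖b‖)^4 := by
              rw [← pdW_eq_fderivA (show (((a,b),s):(ℝ×ℝ)×ℝ) ∈ upperHalf from hs)]
              exact le_trans (clm_apply_le b2 norm_e2.le) (decay_mono hC (norm_nonneg b) hle)
            exact mul_le_decay (one_le_pow₀ (one_le_onePlus b)) hC e1' e2'
      rw [MeasureTheory.integral_congr_ae (Filter.Eventually.of_forall hin)]
      simp
    rw [show (volume : MeasureTheory.Measure ((ℝ×ℝ)×ℝ)).restrict upperHalf
        = ((volume : MeasureTheory.Measure (ℝ×ℝ)).prod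
          ((volume : MeasureTheory.Measure ℝ).restrict (Set.Ioi 0))) from restrict_upperHalf_eq,
      MeasureTheory.integral_prod_symm _ hint2]
    rw [MeasureTheory.setIntegral_congr_fun measurableSet_Ioi h0]
    simp

end ibpHorizA
section ibpUAfull

variable {φ : (ℝ×ℝ)×ℝ → ℝ} {C : ℝ}

lemma ibpUA (hφ : ContDiffOn ℝ 2 φ UA) (hC : 0 ≤ C)
    (hb : ∀ x ∈ UA, |φ x| + ‖fderivWithin ℝ φ UA x‖
      + ‖fderivWithin ℝ (fderivWithin ℝ φ UA) UA x‖ ≤ C / (1+‖x‖)^4) :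
    ∫ x in upperHalf, (φ x * lapW UA φ x + gradSqW UA φ x)
      = - ∫ xh : ℝ×ℝ, φ (xh,0) * (fderivWithin ℝ φ UA (xh,0)) e3 := by
  have hpt : Set.EqOn (fun x => φ x * lapW UA φ x + gradSqW UA φ x)
      (fun x => DvI φ e1 x + DvI φ e2 x + DvI φ e3 x) upperHalf := by
    intro x hx
    simp only
    unfold lapW gradSqW DvI
    rw [pdWpdW_eqA hφ hx e1, pdWpdW_eqA hφ hx e2, pdWpdW_eqA hφ hx e3]
    unfold pdW
    rw [pdW_eq_fderivA hx]
    ring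
  rw [MeasureTheory.setIntegral_congr_fun measurableSet_upperHalf hpt]
  have h1 := DvI_intOnA hφ hC hb norm_e1.le
  have h2 := DvI_intOnA hφ hC hb norm_e2.le
  have h3 := DvI_intOnA hφ hC hb norm_e3.le
  have h12 : MeasureTheory.IntegrableOn (fun x => DvI φ e1 x + DvI φ e2 x) upperHalf := h1.add h2
  rw [MeasureTheory.integral_add h12 h3, MeasureTheory.integral_add h1 h2]
  rw [(horizA hφ hC hb).1, (horizA hφ hC hb).2, vertA hφ hC hb]
  ring

end ibpUAfull
section ibpHalfB

variable {φ : (ℝ×ℝ)×ℝ → ℝ} {C : ℝ}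

noncomputable def EvB (φ : (ℝ×ℝ)×ℝ → ℝ) (v x : (ℝ×ℝ)×ℝ) : ℝ :=
  φ x * (fderivWithin ℝ (fderivWithin ℝ φ UB) UB x v v) + (fderivWithin ℝ φ UB x v)^2

lemma EvB_bound (hC : 0 ≤ C)
    (hb : ∀ x ∈ UB, |φ x| + ‖fderivWithin ℝ φ UB x‖
      + ‖fderivWithin ℝ (fderivWithin ℝ φ UB) UB x‖ ≤ C / (1+‖x‖)^4)
    {v : (ℝ×ℝ)×ℝ} (hv : ‖v‖ ≤ 1) {x : (ℝ×ℝ)×ℝ} (hx : x ∈ UB) :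
    |EvB φ v x| ≤ 2*C^2 / (1+‖x‖)^4 := by
  obtain ⟨h1, h2, h3⟩ := split3 (hb x hx) (abs_nonneg _) (norm_nonneg _) (ContinuousLinearMap.opNorm_nonneg _)
  exact core_bound (one_le_pow₀ (one_le_onePlus x)) hC h1 h2 h3 hv

lemma EvB_contOn (hφ : ContDiffOn ℝ 2 φ UB) (v : (ℝ×ℝ)×ℝ) :
    ContinuousOn (EvB φ v) UB :=
  (hφ.continuousOn.mul (((contOn_f2B hφ).clm_apply continuousOn_const).clm_apply
    continuousOn_const)).add (((contOn_f1B hφ).clm_apply continuousOn_const).pow 2)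

lemma EvB_eq_DvI {x : (ℝ×ℝ)×ℝ} (hx : x ∈ lowerHalf) (v : (ℝ×ℝ)×ℝ) :
    EvB φ v x = DvI φ v x := by
  unfold EvB DvI; rw [pdW_eq_fderivB hx, pdW2_eq_fderivB hx]

lemma EvB_intOn (hφ : ContDiffOn ℝ 2 φ UB) (hC : 0 ≤ C)
    (hb : ∀ x ∈ UB, |φ x| + ‖fderivWithin ℝ φ UB x‖
      + ‖fderivWithin ℝ (fderivWithin ℝ φ UB) UB x‖ ≤ C / (1+‖x‖)^4)
    {v : (ℝ×ℝ)×ℝ} (hv : ‖v‖ ≤ 1) :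
    MeasureTheory.IntegrableOn (EvB φ v) lowerHalf := by
  refine ((integrable_decay3 (2*C^2)).restrict).mono' ?_ ?_
  · exact ((EvB_contOn hφ v).mono lowerHalf_subset_UB).aestronglyMeasurable measurableSet_lowerHalf
  · filter_upwards [MeasureTheory.ae_restrict_mem measurableSet_lowerHalf] with x hx
    exact EvB_bound hC hb hv (lowerHalf_subset_UB hx)

lemma DvI_intOnB (hφ : ContDiffOn ℝ 2 φ UB) (hC : 0 ≤ C)
    (hb : ∀ x ∈ UB, |φ x| + ‖fderivWithin ℝ φ UB x‖
      + ‖fderivWithin ℝ (fderivWithin ℝ φ UB) UB x‖ ≤ C / (1+‖x‖)^4)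
    {v : (ℝ×ℝ)×ℝ} (hv : ‖v‖ ≤ 1) :
    MeasureTheory.IntegrableOn (DvI φ v) lowerHalf :=
  (EvB_intOn hφ hC hb hv).congr_fun (fun x hx => EvB_eq_DvI hx v) measurableSet_lowerHalf

lemma restrict_lowerHalf_eq :
    (volume : MeasureTheory.Measure ((ℝ×ℝ)×ℝ)).restrict lowerHalf
      = ((volume : MeasureTheory.Measure (ℝ×ℝ)).prod
          ((volume : MeasureTheory.Measure ℝ).restrict (Set.Iio 0))) := by
  rw [lowerHalf_eq, MeasureTheory.Measure.volume_eq_prod,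
    ← MeasureTheory.Measure.prod_restrict, MeasureTheory.Measure.restrict_univ]

lemma lineV_contB (xh : ℝ×ℝ) : Continuous (fun s : ℝ => ((xh, s) : (ℝ×ℝ)×ℝ)) :=
  continuous_const.prodMk continuous_id

lemma lineV_mapsToB (xh : ℝ×ℝ) : Set.MapsTo (fun s : ℝ => ((xh, s) : (ℝ×ℝ)×ℝ)) (Set.Iic 0) UB :=
  fun s hs => (hs : s ≤ (0:ℝ))

/-- Vertical part: `∫_{ℝ³₊} D3 = -∫_{ℝ²} φ(xh,0) ∂₃φ(xh,0)`. -/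
lemma vertB (hφ : ContDiffOn ℝ 2 φ UB) (hC : 0 ≤ C)
    (hb : ∀ x ∈ UB, |φ x| + ‖fderivWithin ℝ φ UB x‖
      + ‖fderivWithin ℝ (fderivWithin ℝ φ UB) UB x‖ ≤ C / (1+‖x‖)^4) :
    ∫ x in lowerHalf, DvI φ e3 x
      = ∫ xh : ℝ×ℝ, φ (xh,0) * (fderivWithin ℝ φ UB (xh,0)) e3 := by
  have hsplit : ∀ x ∈ UB, |φ x| ≤ C / (1+‖x‖)^4 ∧ ‖fderivWithin ℝ φ UB x‖ ≤ C / (1+‖x‖)^4 ∧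
      ‖fderivWithin ℝ (fderivWithin ℝ φ UB) UB x‖ ≤ C / (1+‖x‖)^4 := fun x hx =>
    split3 (hb x hx) (abs_nonneg _) (norm_nonneg _) (ContinuousLinearMap.opNorm_nonneg _)
  have hint3 : MeasureTheory.Integrable (DvI φ e3)
      ((volume : MeasureTheory.Measure (ℝ×ℝ)).prod
        ((volume : MeasureTheory.Measure ℝ).restrict (Set.Iio 0))) := by
    rw [← restrict_lowerHalf_eq]; exact DvI_intOnB hφ hC hb norm_e3.le
  have inner : ∀ xh : ℝ×ℝ, ∫ s in Set.Iio (0:ℝ), DvI φ e3 (xh,s)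
      = φ (xh,0) * (fderivWithin ℝ φ UB (xh,0)) e3 := by
    intro xh
    set u : ℝ → ℝ := fun s => φ (xh,s) * (fderivWithin ℝ φ UB (xh,s)) e3 with hu
    have hcont : ContinuousWithinAt u (Set.Iic 0) 0 := by
      have h1 : ContinuousOn u (Set.Iic 0) :=
        ((hφ.continuousOn.comp (lineV_contB xh).continuousOn (lineV_mapsToB xh)).mul
          (((contOn_f1B hφ).clm_apply continuousOn_const).comp
            (lineV_contB xh).continuousOn (lineV_mapsToB xh)))
      exact h1 _ Set.self_mem_Iic
    have hderiv : ∀ s ∈ Set.Iio (0:ℝ), HasDerivAt u (DvI φ e3 (xh,s)) s := by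
      intro s hs
      have hx : ((xh,s) : (ℝ×ℝ)×ℝ) ∈ lowerHalf := hs
      have h1 : HasDerivAt (fun r => φ (xh,r)) (fderiv ℝ φ (xh,s) e3) s :=
        hasDerivAt_vert (diffAtB hφ hx).hasFDerivAt
      have h2 : HasDerivAt (fun r => fderiv ℝ φ (xh,r) e3)
          (fderiv ℝ (fderiv ℝ φ) (xh,s) e3 e3) s :=
        hasDerivAt_vert (hasFDerivAt_apply_const (diffAt_fderivB hφ hx) e3)
      have hw : HasDerivAt (fun r => φ (xh,r) * fderiv ℝ φ (xh,r) e3) (DvI φ e3 (xh,s)) s := by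
        have := h1.mul h2; exact this.congr_deriv (by unfold DvI; ring)
      refine hw.congr_of_eventuallyEq ?_
      filter_upwards [isOpen_Iio.mem_nhds hs] with r hr
      show u r = φ (xh,r) * fderiv ℝ φ (xh,r) e3
      rw [hu]; simp only
      rw [pdW_eq_fderivB (show ((xh,r) : (ℝ×ℝ)×ℝ) ∈ lowerHalf from hr)]
    have hintio : MeasureTheory.IntegrableOn (fun s => DvI φ e3 (xh,s)) (Set.Iio 0) := by
      refine ((integrable_decay1 (2*C^2)).restrict).mono' ?_ ?_
      · have hc : ContinuousOn (fun s : ℝ => EvB φ e3 (xh,s)) (Set.Iio 0) :=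
          (EvB_contOn hφ e3).comp (lineV_contB xh).continuousOn
            (fun s hs => (le_of_lt hs : s ≤ (0:ℝ)))
        have hc2 : ContinuousOn (fun s : ℝ => DvI φ e3 (xh,s)) (Set.Iio 0) :=
          hc.congr (fun s hs => (EvB_eq_DvI (show ((xh,s):(ℝ×ℝ)×ℝ) ∈ lowerHalf from hs) e3).symm)
        exact hc2.aestronglyMeasurable measurableSet_Iio
      · filter_upwards [MeasureTheory.ae_restrict_mem measurableSet_Iio] with s hs
        rw [show DvI φ e3 (xh,s) = EvB φ e3 (xh,s) from
          (EvB_eq_DvI (show ((xh,s):(ℝ×ℝ)×ℝ) ∈ lowerHalf from hs) e3).symm]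
        calc ‖EvB φ e3 (xh,s)‖ ≤ 2*C^2/(1+‖((xh,s) : (ℝ×ℝ)×ℝ)‖)^4 :=
              EvB_bound hC hb norm_e3.le (le_of_lt hs : s ≤ (0:ℝ))
          _ ≤ 2*C^2/(1+‖s‖)^4 := decay_mono (by positivity) (norm_nonneg s)
              (norm_snd_le ((xh,s) : (ℝ×ℝ)×ℝ))
    have htend : Filter.Tendsto u Filter.atBot (nhds 0) := by
      apply squeeze_zero_norm' (a := fun s : ℝ => C^2/(1+‖s‖)^4)
      · filter_upwards [Filter.eventually_le_atBot (0:ℝ)] with s hs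
        have hxU : ((xh,s) : (ℝ×ℝ)×ℝ) ∈ UB := hs
        obtain ⟨b1, b2, _⟩ := hsplit _ hxU
        have e1 : |φ (xh,s)| ≤ C/(1+‖s‖)^4 :=
          le_trans b1 (decay_mono hC (norm_nonneg s) (norm_snd_le ((xh,s) : (ℝ×ℝ)×ℝ)))
        have e2 : |(fderivWithin ℝ φ UB (xh,s)) e3| ≤ C/(1+‖s‖)^4 :=
          le_trans (clm_apply_le b2 norm_e3.le)
            (decay_mono hC (norm_nonneg s) (norm_snd_le ((xh,s) : (ℝ×ℝ)×ℝ)))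
        exact mul_le_decay (one_le_pow₀ (one_le_onePlus s)) hC e1 e2
      · apply Filter.Tendsto.div_atTop (tendsto_const_nhds)
        apply (Filter.tendsto_pow_atTop (by norm_num : (4:ℕ) ≠ 0)).comp
        apply tendsto_atTop_add_const_left _ 1
        show Filter.Tendsto (fun s : ℝ => ‖s‖) Filter.atBot Filter.atTop
        simp only [Real.norm_eq_abs]
        exact tendsto_abs_atBot_atTop
    have hintiic : MeasureTheory.IntegrableOn (fun s => DvI φ e3 (xh,s)) (Set.Iic 0) := by
      rwa [MeasureTheory.IntegrableOn,
        ← MeasureTheory.restrict_Iio_eq_restrict_Iic]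
    have hres := MeasureTheory.integral_Iic_of_hasDerivAt_of_tendsto hcont hderiv hintiic htend
    rw [MeasureTheory.integral_Iic_eq_integral_Iio] at hres
    rw [hres, sub_zero]
  calc ∫ x in lowerHalf, DvI φ e3 x
      = ∫ x, DvI φ e3 x ∂((volume : MeasureTheory.Measure (ℝ×ℝ)).prod
          ((volume : MeasureTheory.Measure ℝ).restrict (Set.Iio 0))) := by
        rw [← restrict_lowerHalf_eq]
    _ = ∫ xh : ℝ×ℝ, ∫ s in Set.Iio (0:ℝ), DvI φ e3 (xh,s) :=
        MeasureTheory.integral_prod _ hint3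
    _ = ∫ xh : ℝ×ℝ, φ (xh,0) * (fderivWithin ℝ φ UB (xh,0)) e3 :=
        MeasureTheory.integral_congr_ae (Filter.Eventually.of_forall inner)

end ibpHalfB
section ibpHorizB

variable {φ : (ℝ×ℝ)×ℝ → ℝ} {C : ℝ}

lemma slice_contB (hφ : ContDiffOn ℝ 2 φ UB) (v : (ℝ×ℝ)×ℝ) {s : ℝ} (hs : s < 0) :
    Continuous (fun xh : ℝ×ℝ => DvI φ v (xh,s)) := by
  have hfe : (fun xh : ℝ×ℝ => DvI φ v (xh,s)) = (fun xh : ℝ×ℝ => EvB φ v (xh,s)) := by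
    funext xh
    exact (EvB_eq_DvI (show ((xh,s):(ℝ×ℝ)×ℝ) ∈ lowerHalf from hs) v).symm
  rw [hfe, ← continuousOn_univ]
  exact (EvB_contOn hφ v).comp (continuous_id.prodMk continuous_const).continuousOn
    (fun xh _ => (le_of_lt hs : s ≤ (0:ℝ)))

lemma slice_intB (hφ : ContDiffOn ℝ 2 φ UB) (hC : 0 ≤ C)
    (hb : ∀ x ∈ UB, |φ x| + ‖fderivWithin ℝ φ UB x‖
      + ‖fderivWithin ℝ (fderivWithin ℝ φ UB) UB x‖ ≤ C / (1+‖x‖)^4)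
    {v : (ℝ×ℝ)×ℝ} (hv : ‖v‖ ≤ 1) {s : ℝ} (hs : s < 0) :
    MeasureTheory.Integrable (fun xh : ℝ×ℝ => DvI φ v (xh,s)) := by
  refine (integrable_decay2 (2*C^2)).mono' (slice_contB hφ v hs).aestronglyMeasurable ?_
  refine Filter.Eventually.of_forall fun xh => ?_
  rw [show DvI φ v (xh,s) = EvB φ v (xh,s) from
    (EvB_eq_DvI (show ((xh,s):(ℝ×ℝ)×ℝ) ∈ lowerHalf from hs) v).symm]
  calc ‖EvB φ v (xh,s)‖ ≤ 2*C^2/(1+‖((xh,s) : (ℝ×ℝ)×ℝ)‖)^4 :=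
        EvB_bound hC hb hv (le_of_lt hs : s ≤ (0:ℝ))
    _ ≤ 2*C^2/(1+‖xh‖)^4 := decay_mono (by positivity) (norm_nonneg xh)
        (norm_fst_le ((xh,s) : (ℝ×ℝ)×ℝ))

lemma horizB (hφ : ContDiffOn ℝ 2 φ UB) (hC : 0 ≤ C)
    (hb : ∀ x ∈ UB, |φ x| + ‖fderivWithin ℝ φ UB x‖
      + ‖fderivWithin ℝ (fderivWithin ℝ φ UB) UB x‖ ≤ C / (1+‖x‖)^4) :
    (∫ x in lowerHalf, DvI φ e1 x) = 0 ∧ (∫ x in lowerHalf, DvI φ e2 x) = 0 := by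
  have hsplit : ∀ x ∈ UB, |φ x| ≤ C / (1+‖x‖)^4 ∧ ‖fderivWithin ℝ φ UB x‖ ≤ C / (1+‖x‖)^4 ∧
      ‖fderivWithin ℝ (fderivWithin ℝ φ UB) UB x‖ ≤ C / (1+‖x‖)^4 := fun x hx =>
    split3 (hb x hx) (abs_nonneg _) (norm_nonneg _) (ContinuousLinearMap.opNorm_nonneg _)
  constructor
  · -- direction e1
    have hint1 : MeasureTheory.Integrable (DvI φ e1)
        ((volume : MeasureTheory.Measure (ℝ×ℝ)).prod
          ((volume : MeasureTheory.Measure ℝ).restrict (Set.Iio 0))) := by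
      rw [← restrict_lowerHalf_eq]; exact DvI_intOnB hφ hC hb norm_e1.le
    have h0 : ∀ s ∈ Set.Iio (0:ℝ), (∫ xh : ℝ×ℝ, DvI φ e1 (xh,s)) = 0 := by
      intro s hs
      have hsl : MeasureTheory.Integrable (fun xh : ℝ×ℝ => DvI φ e1 (xh,s))
          ((volume : MeasureTheory.Measure ℝ).prod (volume : MeasureTheory.Measure ℝ)) := by
        rw [← MeasureTheory.Measure.volume_eq_prod]; exact slice_intB hφ hC hb norm_e1.le hs
      rw [MeasureTheory.Measure.volume_eq_prod,
        MeasureTheory.integral_prod_symm _ hsl]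
      have hin : ∀ b : ℝ, ∫ a : ℝ, DvI φ e1 ((a,b),s) = 0 := by
        intro b
        apply MeasureTheory.integral_eq_zero_of_hasDerivAt_of_integrable
          (f := fun a => φ ((a,b),s) * fderiv ℝ φ ((a,b),s) e1)
        · intro a
          have hx : (((a,b),s) : (ℝ×ℝ)×ℝ) ∈ lowerHalf := hs
          have h1 : HasDerivAt (fun r => φ ((r,b),s)) (fderiv ℝ φ ((a,b),s) e1) a :=
            hasDerivAt_horiz1 (diffAtB hφ hx).hasFDerivAt
          have h2 : HasDerivAt (fun r => fderiv ℝ φ ((r,b),s) e1)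
              (fderiv ℝ (fderiv ℝ φ) ((a,b),s) e1 e1) a :=
            hasDerivAt_horiz1 (hasFDerivAt_apply_const (diffAt_fderivB hφ hx) e1)
          have := h1.mul h2; exact this.congr_deriv (by unfold DvI; ring)
        · -- integrable derivative slice
          refine (integrable_decay1 (2*C^2)).mono' ?_ ?_
          · exact ((slice_contB hφ e1 hs).comp
              (continuous_id.prodMk continuous_const)).aestronglyMeasurable
          · refine Filter.Eventually.of_forall fun a => ?_
            rw [show DvI φ e1 ((a,b),s) = EvB φ e1 ((a,b),s) from
              (EvB_eq_DvI (show (((a,b),s):(ℝ×ℝ)×ℝ) ∈ lowerHalf from hs) e1).symm]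
            calc ‖EvB φ e1 ((a,b),s)‖ ≤ 2*C^2/(1+‖(((a,b),s) : (ℝ×ℝ)×ℝ)‖)^4 :=
                  EvB_bound hC hb norm_e1.le (le_of_lt hs : s ≤ (0:ℝ))
              _ ≤ 2*C^2/(1+‖a‖)^4 := decay_mono (by positivity) (norm_nonneg a)
                  (le_trans (norm_fst_le ((a,b) : ℝ×ℝ)) (norm_fst_le (((a,b),s) : (ℝ×ℝ)×ℝ)))
        · -- integrable function slice
          refine (integrable_decay1 (C^2)).mono' ?_ ?_
          · have hfe : (fun a : ℝ => φ ((a,b),s) * fderiv ℝ φ ((a,b),s) e1)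
                = fun a : ℝ => φ ((a,b),s) * fderivWithin ℝ φ UB ((a,b),s) e1 := by
              funext a
              rw [pdW_eq_fderivB (show (((a,b),s):(ℝ×ℝ)×ℝ) ∈ lowerHalf from hs)]
            rw [hfe]
            have hc : Continuous (fun a : ℝ =>
                φ ((a,b),s) * fderivWithin ℝ φ UB ((a,b),s) e1) := by
              rw [← continuousOn_univ]
              exact ((hφ.continuousOn.mul ((contOn_f1B hφ).clm_apply continuousOn_const)).comp
                (lineH1_cont b s).continuousOn (fun a _ => (le_of_lt hs : s ≤ (0:ℝ))))
            exact hc.aestronglyMeasurable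
          · refine Filter.Eventually.of_forall fun a => ?_
            have hxU : (((a,b),s) : (ℝ×ℝ)×ℝ) ∈ UB := (le_of_lt hs : s ≤ 0)
            obtain ⟨b1, b2, _⟩ := hsplit _ hxU
            have hle : ‖a‖ ≤ ‖(((a,b),s) : (ℝ×ℝ)×ℝ)‖ :=
              le_trans (norm_fst_le ((a,b) : ℝ×ℝ)) (norm_fst_le (((a,b),s) : (ℝ×ℝ)×ℝ))
            have e1' : |φ ((a,b),s)| ≤ C/(1+‖a‖)^4 :=
              le_trans b1 (decay_mono hC (norm_nonneg a) hle)
            have e2' : |fderiv ℝ φ ((a,b),s) e1| ≤ C/(1+‖a‖)^4 := by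
              rw [← pdW_eq_fderivB (show (((a,b),s):(ℝ×ℝ)×ℝ) ∈ lowerHalf from hs)]
              exact le_trans (clm_apply_le b2 norm_e1.le) (decay_mono hC (norm_nonneg a) hle)
            exact mul_le_decay (one_le_pow₀ (one_le_onePlus a)) hC e1' e2'
      rw [MeasureTheory.integral_congr_ae (Filter.Eventually.of_forall hin)]
      simp
    rw [show (volume : MeasureTheory.Measure ((ℝ×ℝ)×ℝ)).restrict lowerHalf
        = ((volume : MeasureTheory.Measure (ℝ×ℝ)).prod
          ((volume : MeasureTheory.Measure ℝ).restrict (Set.Iio 0))) from restrict_lowerHalf_eq,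
      MeasureTheory.integral_prod_symm _ hint1]
    rw [MeasureTheory.setIntegral_congr_fun measurableSet_Iio h0]
    simp
  · -- direction e2
    have hint2 : MeasureTheory.Integrable (DvI φ e2)
        ((volume : MeasureTheory.Measure (ℝ×ℝ)).prod
          ((volume : MeasureTheory.Measure ℝ).restrict (Set.Iio 0))) := by
      rw [← restrict_lowerHalf_eq]; exact DvI_intOnB hφ hC hb norm_e2.le
    have h0 : ∀ s ∈ Set.Iio (0:ℝ), (∫ xh : ℝ×ℝ, DvI φ e2 (xh,s)) = 0 := by
      intro s hs
      have hsl : MeasureTheory.Integrable (fun xh : ℝ×ℝ => DvI φ e2 (xh,s))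
          ((volume : MeasureTheory.Measure ℝ).prod (volume : MeasureTheory.Measure ℝ)) := by
        rw [← MeasureTheory.Measure.volume_eq_prod]; exact slice_intB hφ hC hb norm_e2.le hs
      rw [MeasureTheory.Measure.volume_eq_prod,
        MeasureTheory.integral_prod _ hsl]
      have hin : ∀ a : ℝ, ∫ b : ℝ, DvI φ e2 ((a,b),s) = 0 := by
        intro a
        apply MeasureTheory.integral_eq_zero_of_hasDerivAt_of_integrable
          (f := fun b => φ ((a,b),s) * fderiv ℝ φ ((a,b),s) e2)
        · intro b
          have hx : (((a,b),s) : (ℝ×ℝ)×ℝ) ∈ lowerHalf := hs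
          have h1 : HasDerivAt (fun r => φ ((a,r),s)) (fderiv ℝ φ ((a,b),s) e2) b :=
            hasDerivAt_horiz2 (diffAtB hφ hx).hasFDerivAt
          have h2 : HasDerivAt (fun r => fderiv ℝ φ ((a,r),s) e2)
              (fderiv ℝ (fderiv ℝ φ) ((a,b),s) e2 e2) b :=
            hasDerivAt_horiz2 (hasFDerivAt_apply_const (diffAt_fderivB hφ hx) e2)
          have := h1.mul h2; exact this.congr_deriv (by unfold DvI; ring)
        · refine (integrable_decay1 (2*C^2)).mono' ?_ ?_
          · exact ((slice_contB hφ e2 hs).comp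
              (continuous_const.prodMk continuous_id)).aestronglyMeasurable
          · refine Filter.Eventually.of_forall fun b => ?_
            rw [show DvI φ e2 ((a,b),s) = EvB φ e2 ((a,b),s) from
              (EvB_eq_DvI (show (((a,b),s):(ℝ×ℝ)×ℝ) ∈ lowerHalf from hs) e2).symm]
            calc ‖EvB φ e2 ((a,b),s)‖ ≤ 2*C^2/(1+‖(((a,b),s) : (ℝ×ℝ)×ℝ)‖)^4 :=
                  EvB_bound hC hb norm_e2.le (le_of_lt hs : s ≤ (0:ℝ))
              _ ≤ 2*C^2/(1+‖b‖)^4 := decay_mono (by positivity) (norm_nonneg b)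
                  (le_trans (norm_snd_le ((a,b) : ℝ×ℝ)) (norm_fst_le (((a,b),s) : (ℝ×ℝ)×ℝ)))
        · refine (integrable_decay1 (C^2)).mono' ?_ ?_
          · have hfe : (fun b : ℝ => φ ((a,b),s) * fderiv ℝ φ ((a,b),s) e2)
                = fun b : ℝ => φ ((a,b),s) * fderivWithin ℝ φ UB ((a,b),s) e2 := by
              funext b
              rw [pdW_eq_fderivB (show (((a,b),s):(ℝ×ℝ)×ℝ) ∈ lowerHalf from hs)]
            rw [hfe]
            have hc : Continuous (fun b : ℝ =>
                φ ((a,b),s) * fderivWithin ℝ φ UB ((a,b),s) e2) := by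
              rw [← continuousOn_univ]
              exact ((hφ.continuousOn.mul ((contOn_f1B hφ).clm_apply continuousOn_const)).comp
                (lineH2_cont a s).continuousOn (fun b _ => (le_of_lt hs : s ≤ (0:ℝ))))
            exact hc.aestronglyMeasurable
          · refine Filter.Eventually.of_forall fun b => ?_
            have hxU : (((a,b),s) : (ℝ×ℝ)×ℝ) ∈ UB := (le_of_lt hs : s ≤ 0)
            obtain ⟨b1, b2, _⟩ := hsplit _ hxU
            have hle : ‖b‖ ≤ ‖(((a,b),s) : (ℝ×ℝ)×ℝ)‖ :=
              le_trans (norm_snd_le ((a,b) : ℝ×ℝ)) (norm_fst_le (((a,b),s) : (ℝ×ℝ)×ℝ))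
            have e1' : |φ ((a,b),s)| ≤ C/(1+‖b‖)^4 :=
              le_trans b1 (decay_mono hC (norm_nonneg b) hle)
            have e2' : |fderiv ℝ φ ((a,b),s) e2| ≤ C/(1+‖b‖)^4 := by
              rw [← pdW_eq_fderivB (show (((a,b),s):(ℝ×ℝ)×ℝ) ∈ lowerHalf from hs)]
              exact le_trans (clm_apply_le b2 norm_e2.le) (decay_mono hC (norm_nonneg b) hle)
            exact mul_le_decay (one_le_pow₀ (one_le_onePlus b)) hC e1' e2'
      rw [MeasureTheory.integral_congr_ae (Filter.Eventually.of_forall hin)]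
      simp
    rw [show (volume : MeasureTheory.Measure ((ℝ×ℝ)×ℝ)).restrict lowerHalf
        = ((volume : MeasureTheory.Measure (ℝ×ℝ)).prod
          ((volume : MeasureTheory.Measure ℝ).restrict (Set.Iio 0))) from restrict_lowerHalf_eq,
      MeasureTheory.integral_prod_symm _ hint2]
    rw [MeasureTheory.setIntegral_congr_fun measurableSet_Iio h0]
    simp

end ibpHorizB
section ibpUBfull

variable {φ : (ℝ×ℝ)×ℝ → ℝ} {C : ℝ}

lemma ibpUB (hφ : ContDiffOn ℝ 2 φ UB) (hC : 0 ≤ C)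
    (hb : ∀ x ∈ UB, |φ x| + ‖fderivWithin ℝ φ UB x‖
      + ‖fderivWithin ℝ (fderivWithin ℝ φ UB) UB x‖ ≤ C / (1+‖x‖)^4) :
    ∫ x in lowerHalf, (φ x * lapW UB φ x + gradSqW UB φ x)
      = ∫ xh : ℝ×ℝ, φ (xh,0) * (fderivWithin ℝ φ UB (xh,0)) e3 := by
  have hpt : Set.EqOn (fun x => φ x * lapW UB φ x + gradSqW UB φ x)
      (fun x => DvI φ e1 x + DvI φ e2 x + DvI φ e3 x) lowerHalf := by
    intro x hx
    simp only
    unfold lapW gradSqW DvI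
    rw [pdWpdW_eqB hφ hx e1, pdWpdW_eqB hφ hx e2, pdWpdW_eqB hφ hx e3]
    unfold pdW
    rw [pdW_eq_fderivB hx]
    ring
  rw [MeasureTheory.setIntegral_congr_fun measurableSet_lowerHalf hpt]
  have h1 := DvI_intOnB hφ hC hb norm_e1.le
  have h2 := DvI_intOnB hφ hC hb norm_e2.le
  have h3 := DvI_intOnB hφ hC hb norm_e3.le
  have h12 : MeasureTheory.IntegrableOn (fun x => DvI φ e1 x + DvI φ e2 x) lowerHalf := h1.add h2
  rw [MeasureTheory.integral_add h12 h3, MeasureTheory.integral_add h1 h2]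
  rw [(horizB hφ hC hb).1, (horizB hφ hC hb).2, vertB hφ hC hb]
  ring

end ibpUBfull
section moreIntegrability

variable {φ : (ℝ×ℝ)×ℝ → ℝ} {ψ : ℝ×ℝ → ℝ} {C : ℝ}

lemma gradSq_intOnA (hφ : ContDiffOn ℝ 2 φ UA) (hC : 0 ≤ C)
    (hb : ∀ x ∈ UA, |φ x| + ‖fderivWithin ℝ φ UA x‖
      + ‖fderivWithin ℝ (fderivWithin ℝ φ UA) UA x‖ ≤ C / (1+‖x‖)^4) :
    MeasureTheory.IntegrableOn (gradSqW UA φ) upperHalf := by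
  refine ((integrable_decay3 (3*C^2)).restrict).mono' ?_ ?_
  · have hc : ContinuousOn (gradSqW UA φ) UA := by
      unfold gradSqW pdW
      exact ((((contOn_f1A hφ).clm_apply continuousOn_const).pow 2).add
        (((contOn_f1A hφ).clm_apply continuousOn_const).pow 2)).add
        (((contOn_f1A hφ).clm_apply continuousOn_const).pow 2)
    exact (hc.mono upperHalf_subset_UA).aestronglyMeasurable measurableSet_upperHalf
  · filter_upwards [MeasureTheory.ae_restrict_mem measurableSet_upperHalf] with x hx
    obtain ⟨_, h2, _⟩ := split3 (hb x (upperHalf_subset_UA hx)) (abs_nonneg _)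
      (norm_nonneg _) (ContinuousLinearMap.opNorm_nonneg _)
    have hP : (1:ℝ) ≤ (1+‖x‖)^4 := one_le_pow₀ (one_le_onePlus x)
    have key : ∀ v : (ℝ×ℝ)×ℝ, ‖v‖ ≤ 1 → |(fderivWithin ℝ φ UA x v)^2| ≤ C^2/(1+‖x‖)^4 := by
      intro v hv
      rw [sq (fderivWithin ℝ φ UA x v)]
      exact mul_le_decay hP hC (clm_apply_le h2 hv) (clm_apply_le h2 hv)
    have k1 := key e1 norm_e1.le; have k2 := key e2 norm_e2.le; have k3 := key e3 norm_e3.le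
    have : |gradSqW UA φ x| ≤ C^2/(1+‖x‖)^4 + C^2/(1+‖x‖)^4 + C^2/(1+‖x‖)^4 := by
      unfold gradSqW pdW
      calc |(fderivWithin ℝ φ UA x e1)^2 + (fderivWithin ℝ φ UA x e2)^2
            + (fderivWithin ℝ φ UA x e3)^2|
          ≤ |(fderivWithin ℝ φ UA x e1)^2 + (fderivWithin ℝ φ UA x e2)^2|
            + |(fderivWithin ℝ φ UA x e3)^2| := abs_add_le _ _
        _ ≤ |(fderivWithin ℝ φ UA x e1)^2| + |(fderivWithin ℝ φ UA x e2)^2|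
            + |(fderivWithin ℝ φ UA x e3)^2| := by linarith [abs_add_le ((fderivWithin ℝ φ UA x e1)^2) ((fderivWithin ℝ φ UA x e2)^2)]
        _ ≤ C^2/(1+‖x‖)^4 + C^2/(1+‖x‖)^4 + C^2/(1+‖x‖)^4 := by linarith
    calc ‖gradSqW UA φ x‖ ≤ C^2/(1+‖x‖)^4 + C^2/(1+‖x‖)^4 + C^2/(1+‖x‖)^4 := this
      _ = 3*C^2/(1+‖x‖)^4 := by rw [show (3:ℝ)*C^2 = C^2+C^2+C^2 by ring, add_div, add_div]

lemma gradSq_intOnB (hφ : ContDiffOn ℝ 2 φ UB) (hC : 0 ≤ C)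
    (hb : ∀ x ∈ UB, |φ x| + ‖fderivWithin ℝ φ UB x‖
      + ‖fderivWithin ℝ (fderivWithin ℝ φ UB) UB x‖ ≤ C / (1+‖x‖)^4) :
    MeasureTheory.IntegrableOn (gradSqW UB φ) lowerHalf := by
  refine ((integrable_decay3 (3*C^2)).restrict).mono' ?_ ?_
  · have hc : ContinuousOn (gradSqW UB φ) UB := by
      unfold gradSqW pdW
      exact ((((contOn_f1B hφ).clm_apply continuousOn_const).pow 2).add
        (((contOn_f1B hφ).clm_apply continuousOn_const).pow 2)).add
        (((contOn_f1B hφ).clm_apply continuousOn_const).pow 2)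
    exact (hc.mono lowerHalf_subset_UB).aestronglyMeasurable measurableSet_lowerHalf
  · filter_upwards [MeasureTheory.ae_restrict_mem measurableSet_lowerHalf] with x hx
    obtain ⟨_, h2, _⟩ := split3 (hb x (lowerHalf_subset_UB hx)) (abs_nonneg _)
      (norm_nonneg _) (ContinuousLinearMap.opNorm_nonneg _)
    have hP : (1:ℝ) ≤ (1+‖x‖)^4 := one_le_pow₀ (one_le_onePlus x)
    have key : ∀ v : (ℝ×ℝ)×ℝ, ‖v‖ ≤ 1 → |(fderivWithin ℝ φ UB x v)^2| ≤ C^2/(1+‖x‖)^4 := by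
      intro v hv
      rw [sq (fderivWithin ℝ φ UB x v)]
      exact mul_le_decay hP hC (clm_apply_le h2 hv) (clm_apply_le h2 hv)
    have k1 := key e1 norm_e1.le; have k2 := key e2 norm_e2.le; have k3 := key e3 norm_e3.le
    have : |gradSqW UB φ x| ≤ C^2/(1+‖x‖)^4 + C^2/(1+‖x‖)^4 + C^2/(1+‖x‖)^4 := by
      unfold gradSqW pdW
      calc |(fderivWithin ℝ φ UB x e1)^2 + (fderivWithin ℝ φ UB x e2)^2
            + (fderivWithin ℝ φ UB x e3)^2|
          ≤ |(fderivWithin ℝ φ UB x e1)^2 + (fderivWithin ℝ φ UB x e2)^2|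
            + |(fderivWithin ℝ φ UB x e3)^2| := abs_add_le _ _
        _ ≤ |(fderivWithin ℝ φ UB x e1)^2| + |(fderivWithin ℝ φ UB x e2)^2|
            + |(fderivWithin ℝ φ UB x e3)^2| := by linarith [abs_add_le ((fderivWithin ℝ φ UB x e1)^2) ((fderivWithin ℝ φ UB x e2)^2)]
        _ ≤ C^2/(1+‖x‖)^4 + C^2/(1+‖x‖)^4 + C^2/(1+‖x‖)^4 := by linarith
    calc ‖gradSqW UB φ x‖ ≤ C^2/(1+‖x‖)^4 + C^2/(1+‖x‖)^4 + C^2/(1+‖x‖)^4 := this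
      _ = 3*C^2/(1+‖x‖)^4 := by rw [show (3:ℝ)*C^2 = C^2+C^2+C^2 by ring, add_div, add_div]

lemma philap_intOnA (hφ : ContDiffOn ℝ 2 φ UA) (hC : 0 ≤ C)
    (hb : ∀ x ∈ UA, |φ x| + ‖fderivWithin ℝ φ UA x‖
      + ‖fderivWithin ℝ (fderivWithin ℝ φ UA) UA x‖ ≤ C / (1+‖x‖)^4) :
    MeasureTheory.IntegrableOn (fun x => φ x * lapW UA φ x) upperHalf := by
  have h1 := DvI_intOnA hφ hC hb norm_e1.le
  have h2 := DvI_intOnA hφ hC hb norm_e2.le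
  have h3 := DvI_intOnA hφ hC hb norm_e3.le
  have hg := gradSq_intOnA hφ hC hb
  have hsum : MeasureTheory.IntegrableOn
      (fun x => DvI φ e1 x + DvI φ e2 x + DvI φ e3 x - gradSqW UA φ x) upperHalf :=
    ((h1.add h2).add h3).sub hg
  refine hsum.congr_fun ?_ measurableSet_upperHalf
  intro x hx
  simp only
  unfold DvI lapW gradSqW
  rw [pdWpdW_eqA hφ hx e1, pdWpdW_eqA hφ hx e2, pdWpdW_eqA hφ hx e3]
  unfold pdW
  rw [pdW_eq_fderivA hx]
  ring

lemma philap_intOnB (hφ : ContDiffOn ℝ 2 φ UB) (hC : 0 ≤ C)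
    (hb : ∀ x ∈ UB, |φ x| + ‖fderivWithin ℝ φ UB x‖
      + ‖fderivWithin ℝ (fderivWithin ℝ φ UB) UB x‖ ≤ C / (1+‖x‖)^4) :
    MeasureTheory.IntegrableOn (fun x => φ x * lapW UB φ x) lowerHalf := by
  have h1 := DvI_intOnB hφ hC hb norm_e1.le
  have h2 := DvI_intOnB hφ hC hb norm_e2.le
  have h3 := DvI_intOnB hφ hC hb norm_e3.le
  have hg := gradSq_intOnB hφ hC hb
  have hsum : MeasureTheory.IntegrableOn
      (fun x => DvI φ e1 x + DvI φ e2 x + DvI φ e3 x - gradSqW UB φ x) lowerHalf :=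
    ((h1.add h2).add h3).sub hg
  refine hsum.congr_fun ?_ measurableSet_lowerHalf
  intro x hx
  simp only
  unfold DvI lapW gradSqW
  rw [pdWpdW_eqB hφ hx e1, pdWpdW_eqB hφ hx e2, pdWpdW_eqB hφ hx e3]
  unfold pdW
  rw [pdW_eq_fderivB hx]
  ring

lemma gradSqH_int (hψ : ContDiff ℝ 2 ψ) (hC : 0 ≤ C)
    (hb : ∀ x : ℝ×ℝ, |ψ x| + ‖fderiv ℝ ψ x‖ + ‖fderiv ℝ (fderiv ℝ ψ) x‖ ≤ C / (1+‖x‖)^4) :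
    MeasureTheory.Integrable (gradSqH ψ) := by
  have hc1 : Continuous (fderiv ℝ ψ) := (hψ.fderiv_right (m := 1) (by norm_num)).continuous
  refine (integrable_decay2 (2*C^2)).mono' ?_ ?_
  · unfold gradSqH pdH
    exact (((hc1.clm_apply continuous_const).pow 2).add
      ((hc1.clm_apply continuous_const).pow 2)).aestronglyMeasurable
  · refine Filter.Eventually.of_forall fun x => ?_
    obtain ⟨_, h2, _⟩ := split3 (hb x) (abs_nonneg _) (norm_nonneg _) (ContinuousLinearMap.opNorm_nonneg _)
    have hP : (1:ℝ) ≤ (1+‖x‖)^4 := one_le_pow₀ (one_le_onePlus x)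
    have key : ∀ v : ℝ×ℝ, ‖v‖ ≤ 1 → |(fderiv ℝ ψ x v)^2| ≤ C^2/(1+‖x‖)^4 := by
      intro v hv
      rw [sq (fderiv ℝ ψ x v)]
      exact mul_le_decay hP hC (clm_apply_le h2 hv) (clm_apply_le h2 hv)
    have k1 := key (1,0) norm_v10.le; have k2 := key (0,1) norm_v01.le
    have habs : |gradSqH ψ x| ≤ C^2/(1+‖x‖)^4 + C^2/(1+‖x‖)^4 := by
      unfold gradSqH pdH
      calc |(fderiv ℝ ψ x (1,0))^2 + (fderiv ℝ ψ x (0,1))^2|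
          ≤ |(fderiv ℝ ψ x (1,0))^2| + |(fderiv ℝ ψ x (0,1))^2| := abs_add_le _ _
        _ ≤ C^2/(1+‖x‖)^4 + C^2/(1+‖x‖)^4 := by linarith
    calc ‖gradSqH ψ x‖ ≤ C^2/(1+‖x‖)^4 + C^2/(1+‖x‖)^4 := habs
      _ = 2*C^2/(1+‖x‖)^4 := by rw [show (2:ℝ)*C^2 = C^2+C^2 by ring, add_div]

lemma psilapH_int (hψ : ContDiff ℝ 2 ψ) (hC : 0 ≤ C)
    (hb : ∀ x : ℝ×ℝ, |ψ x| + ‖fderiv ℝ ψ x‖ + ‖fderiv ℝ (fderiv ℝ ψ) x‖ ≤ C / (1+‖x‖)^4) :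
    MeasureTheory.Integrable (fun x => ψ x * lapH ψ x) := by
  have hc2 : Continuous (fderiv ℝ (fderiv ℝ ψ)) :=
    (hψ.fderiv_right (m := 1) (by norm_num)).continuous_fderiv one_ne_zero
  have hfe : (fun x => ψ x * lapH ψ x) = fun x : ℝ×ℝ =>
      ψ x * (fderiv ℝ (fderiv ℝ ψ) x (1,0) (1,0) + fderiv ℝ (fderiv ℝ ψ) x (0,1) (0,1)) := by
    funext x
    unfold lapH
    rw [pdHpdH_eq hψ x (1,0), pdHpdH_eq hψ x (0,1)]
  rw [hfe]
  refine (integrable_decay2 (2*C^2)).mono' ?_ ?_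
  · exact (hψ.continuous.mul
      ((((hc2.clm_apply continuous_const).clm_apply continuous_const)).add
        (((hc2.clm_apply continuous_const).clm_apply continuous_const)))).aestronglyMeasurable
  · refine Filter.Eventually.of_forall fun x => ?_
    obtain ⟨h1, _, h3⟩ := split3 (hb x) (abs_nonneg _) (norm_nonneg _) (ContinuousLinearMap.opNorm_nonneg _)
    have hP : (1:ℝ) ≤ (1+‖x‖)^4 := one_le_pow₀ (one_le_onePlus x)
    have key : ∀ v : ℝ×ℝ, ‖v‖ ≤ 1 →
        |ψ x * fderiv ℝ (fderiv ℝ ψ) x v v| ≤ C^2/(1+‖x‖)^4 := fun v hv =>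
      mul_le_decay hP hC h1 (clm2_apply_le h3 hv hv)
    have k1 := key (1,0) norm_v10.le; have k2 := key (0,1) norm_v01.le
    have habs : |ψ x * (fderiv ℝ (fderiv ℝ ψ) x (1,0) (1,0)
        + fderiv ℝ (fderiv ℝ ψ) x (0,1) (0,1))| ≤ C^2/(1+‖x‖)^4 + C^2/(1+‖x‖)^4 := by
      rw [mul_add]
      calc |ψ x * fderiv ℝ (fderiv ℝ ψ) x (1,0) (1,0)
            + ψ x * fderiv ℝ (fderiv ℝ ψ) x (0,1) (0,1)|
          ≤ |ψ x * fderiv ℝ (fderiv ℝ ψ) x (1,0) (1,0)|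
            + |ψ x * fderiv ℝ (fderiv ℝ ψ) x (0,1) (0,1)| := abs_add_le _ _
        _ ≤ C^2/(1+‖x‖)^4 + C^2/(1+‖x‖)^4 := by linarith
    calc ‖ψ x * (fderiv ℝ (fderiv ℝ ψ) x (1,0) (1,0) + fderiv ℝ (fderiv ℝ ψ) x (0,1) (0,1))‖
        ≤ C^2/(1+‖x‖)^4 + C^2/(1+‖x‖)^4 := habs
      _ = 2*C^2/(1+‖x‖)^4 := by rw [show (2:ℝ)*C^2 = C^2+C^2 by ring, add_div]

end moreIntegrability

section dui

lemma dui {α : Type*} [MeasurableSpace α] {μ : MeasureTheory.Measure α}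
    (θ : α → ℝ → ℝ) (g : α → ℝ) (t₀ ε : ℝ) (hε : 0 < ε)
    (hmeas : ∀ t ∈ Metric.ball t₀ ε, MeasureTheory.AEStronglyMeasurable (fun a => θ a t) μ)
    (hint : MeasureTheory.Integrable (fun a => (θ a t₀)^2) μ)
    (hmeas' : MeasureTheory.AEStronglyMeasurable (fun a => deriv (θ a) t₀) μ)
    (hgint : MeasureTheory.Integrable (fun a => 2 * (g a)^2) μ)
    (hg : ∀ᵐ a ∂μ, ∀ t ∈ Metric.ball t₀ ε, |θ a t| ≤ g a ∧ |deriv (θ a) t| ≤ g a)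
    (hd : ∀ᵐ a ∂μ, ∀ t ∈ Metric.ball t₀ ε, HasDerivAt (θ a) (deriv (θ a) t) t) :
    HasDerivAt (fun t => ∫ a, (θ a t)^2 ∂μ)
      (∫ a, 2 * θ a t₀ * deriv (θ a) t₀ ∂μ) t₀ := by
  have H := hasDerivAt_integral_of_dominated_loc_of_deriv_le (μ := μ)
    (F := fun t a => (θ a t)^2) (F' := fun t a => 2 * θ a t * deriv (θ a) t)
    (bound := fun a => 2*(g a)^2) (x₀ := t₀) (s := Metric.ball t₀ ε) (Metric.ball_mem_nhds t₀ hε)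
    ?_ hint ?_ ?_ hgint ?_
  · exact H.2
  · filter_upwards [Metric.ball_mem_nhds t₀ hε] with t ht
    simp only [pow_two]; exact (hmeas t ht).mul (hmeas t ht)
  · exact ((hmeas t₀ (Metric.mem_ball_self hε)).const_mul 2).mul hmeas'
  · filter_upwards [hg] with a ha t ht
    obtain ⟨h1, h2⟩ := ha t ht
    have hga : 0 ≤ g a := le_trans (abs_nonneg _) h1
    have : ‖2 * θ a t * deriv (θ a) t‖ = 2 * (|θ a t| * |deriv (θ a) t|) := by
      rw [Real.norm_eq_abs, abs_mul, abs_mul]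
      simp [abs_two]
      ring
    rw [this]
    have : |θ a t| * |deriv (θ a) t| ≤ g a * g a :=
      mul_le_mul h1 h2 (abs_nonneg _) hga
    nlinarith
  · filter_upwards [hd] with a ha t ht
    have h := (ha t ht).pow 2
    exact h.congr_deriv (by simp)

end dui

end ibp2D

/-- A classical decaying solution of the three-phase heat system on `(0,T)` with constants
`κ_A, κ_B, κ_S, α_S`: regularity up to the interface, the three heat equations, the interface
conditions, and the polynomial decay bounds with a continuous function `M` on `(0,T)`. -/
structure ClassicalDecayingSolution (T κA κB κS αS : ℝ)
    (θA θB : (ℝ × ℝ) × ℝ → ℝ → ℝ) (θS : ℝ × ℝ → ℝ → ℝ) : Prop where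
  contA : ContinuousOn (fun p : ((ℝ × ℝ) × ℝ) × ℝ => θA p.1 p.2) (UA ×ˢ Ioo 0 T)
  contB : ContinuousOn (fun p : ((ℝ × ℝ) × ℝ) × ℝ => θB p.1 p.2) (UB ×ˢ Ioo 0 T)
  contS : ContinuousOn (fun p : (ℝ × ℝ) × ℝ => θS p.1 p.2) (univ ×ˢ Ioo 0 T)
  spaceA : ∀ t ∈ Ioo (0 : ℝ) T, ContDiffOn ℝ 2 (fun x => θA x t) UA
  spaceB : ∀ t ∈ Ioo (0 : ℝ) T, ContDiffOn ℝ 2 (fun x => θB x t) UB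
  spaceS : ∀ t ∈ Ioo (0 : ℝ) T, ContDiff ℝ 2 (fun xh => θS xh t)
  timeA : ∀ x ∈ UA, ∀ t ∈ Ioo (0 : ℝ) T, DifferentiableAt ℝ (θA x) t
  timeB : ∀ x ∈ UB, ∀ t ∈ Ioo (0 : ℝ) T, DifferentiableAt ℝ (θB x) t
  timeS : ∀ xh : ℝ × ℝ, ∀ t ∈ Ioo (0 : ℝ) T, DifferentiableAt ℝ (θS xh) t
  timeDerivContA : ContinuousOn (fun p : ((ℝ × ℝ) × ℝ) × ℝ => deriv (θA p.1) p.2)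
    (UA ×ˢ Ioo 0 T)
  timeDerivContB : ContinuousOn (fun p : ((ℝ × ℝ) × ℝ) × ℝ => deriv (θB p.1) p.2)
    (UB ×ˢ Ioo 0 T)
  timeDerivContS : ContinuousOn (fun p : (ℝ × ℝ) × ℝ => deriv (θS p.1) p.2)
    (univ ×ˢ Ioo 0 T)
  pdeA : ∀ x : (ℝ × ℝ) × ℝ, 0 < x.2 → ∀ t ∈ Ioo (0 : ℝ) T,
    deriv (θA x) t = κA * lapW UA (fun y => θA y t) x
  pdeB : ∀ x : (ℝ × ℝ) × ℝ, x.2 < 0 → ∀ t ∈ Ioo (0 : ℝ) T,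
    deriv (θB x) t = κB * lapW UB (fun y => θB y t) x
  pdeS : ∀ xh : ℝ × ℝ, ∀ t ∈ Ioo (0 : ℝ) T,
    αS * deriv (θS xh) t = κS * lapH (fun y => θS y t) xh
      + κA * pdW UA e3 (fun y => θA y t) (xh, 0)
      - κB * pdW UB e3 (fun y => θB y t) (xh, 0)
  interfaceA : ∀ xh : ℝ × ℝ, ∀ t ∈ Ioo (0 : ℝ) T, θA (xh, 0) t = θS xh t
  interfaceB : ∀ xh : ℝ × ℝ, ∀ t ∈ Ioo (0 : ℝ) T, θB (xh, 0) t = θS xh t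
  decay : ∃ M : ℝ → ℝ, ContinuousOn M (Ioo 0 T) ∧
    (∀ x ∈ UA, ∀ t ∈ Ioo (0 : ℝ) T,
      |θA x t| + |deriv (θA x) t| + ‖fderivWithin ℝ (fun y => θA y t) UA x‖
        + ‖fderivWithin ℝ (fderivWithin ℝ (fun y => θA y t) UA) UA x‖
        ≤ M t / (1 + ‖x‖) ^ 4) ∧
    (∀ x ∈ UB, ∀ t ∈ Ioo (0 : ℝ) T,
      |θB x t| + |deriv (θB x) t| + ‖fderivWithin ℝ (fun y => θB y t) UB x‖
        + ‖fderivWithin ℝ (fderivWithin ℝ (fun y => θB y t) UB) UB x‖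
        ≤ M t / (1 + ‖x‖) ^ 4) ∧
    (∀ xh : ℝ × ℝ, ∀ t ∈ Ioo (0 : ℝ) T,
      |θS xh t| + |deriv (θS xh) t| + ‖fderiv ℝ (fun y => θS y t) xh‖
        + ‖fderiv ℝ (fderiv ℝ (fun y => θS y t)) xh‖ ≤ M t / (1 + ‖xh‖) ^ 4)

/-- The total heat energy
`E(t) = ∫_{ℝ³₊} θ_A² dx + ∫_{ℝ³₋} θ_B² dx + α_S ∫_{ℝ²} θ_S² dx_h`. -/
noncomputable def energy (αS : ℝ) (θA θB : (ℝ × ℝ) × ℝ → ℝ → ℝ) (θS : ℝ × ℝ → ℝ → ℝ)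
    (t : ℝ) : ℝ :=
  (∫ x in upperHalf, (θA x t) ^ 2) + (∫ x in lowerHalf, (θB x t) ^ 2)
    + αS * ∫ xh : ℝ × ℝ, (θS xh t) ^ 2


/-- differential form of the energy equality (1.3) in Theorem 1.1.
For any classical decaying solution of the three-phase heat system, the energy `E` is
differentiable on `(0,T)` with
`E'(t) = −2κ_A ∫_{ℝ³₊} |∇θ_A|² − 2κ_B ∫_{ℝ³₋} |∇θ_B|² − 2κ_S ∫_{ℝ²} |∇_hθ_S|²`;
in particular the interface flux terms cancel in the energy balance. -/
theorem energy_hasDerivAt (T κA κB κS αS : ℝ) (hT : 0 < T)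
    (hκA : 0 < κA) (hκB : 0 < κB) (hκS : 0 < κS) (hαS : 0 < αS)
    (θA θB : (ℝ × ℝ) × ℝ → ℝ → ℝ) (θS : ℝ × ℝ → ℝ → ℝ)
    (hsol : ClassicalDecayingSolution T κA κB κS αS θA θB θS) :
    ∀ t ∈ Set.Ioo (0 : ℝ) T,
      HasDerivAt (energy αS θA θB θS)
        (-2 * κA * (∫ x in upperHalf, gradSqW UA (fun y => θA y t) x)
          - 2 * κB * (∫ x in lowerHalf, gradSqW UB (fun y => θB y t) x)
          - 2 * κS * ∫ xh : ℝ × ℝ, gradSqH (fun y => θS y t) xh) t := by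
  classical
  obtain ⟨M, hMcont, hbA, hbB, hbS⟩ := hsol.decay
  intro t ht
  obtain ⟨ht0, htT⟩ := ht
  have htIoo : t ∈ Set.Ioo 0 T := ⟨ht0, htT⟩
  -- time-local setup
  set ε : ℝ := min t (T - t) / 2 with hεdef
  have hmin : 0 < min t (T - t) := lt_min ht0 (by linarith)
  have hε : 0 < ε := by positivity
  have hball : Metric.ball t ε ⊆ Set.Icc (t - ε) (t + ε) := by
    intro r hr
    rw [Metric.mem_ball, Real.dist_eq] at hr
    obtain ⟨h1, h2⟩ := abs_lt.mp hr
    exact ⟨by linarith, by linarith⟩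
  have hIcc : Set.Icc (t - ε) (t + ε) ⊆ Set.Ioo 0 T := by
    intro r hr
    obtain ⟨h1, h2⟩ := hr
    have hm1 : min t (T-t) ≤ t := min_le_left _ _
    have hm2 : min t (T-t) ≤ T - t := min_le_right _ _
    constructor
    · have : ε ≤ t/2 := by rw [hεdef]; linarith
      linarith
    · have : ε ≤ (T-t)/2 := by rw [hεdef]; linarith
      linarith
  have hballIoo : Metric.ball t ε ⊆ Set.Ioo 0 T := fun r hr => hIcc (hball hr)
  obtain ⟨K₀, hK₀⟩ := isCompact_Icc.exists_bound_of_continuousOn (hMcont.mono hIcc)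
  set K := max K₀ 0 with hKdef
  have hK0 : (0:ℝ) ≤ K := le_max_right _ _
  have hMK : ∀ r ∈ Metric.ball t ε, M r ≤ K := fun r hr =>
    le_trans (le_trans (le_abs_self _) (hK₀ r (hball hr))) (le_max_left _ _)
  have htmem : t ∈ Metric.ball t ε := Metric.mem_ball_self hε
  -- continuity of the decay majorant
  have hgK3 : Continuous (fun x : (ℝ×ℝ)×ℝ => K / (1+‖x‖)^4) :=
    continuous_const.div ((continuous_const.add continuous_norm).pow 4)
      (fun x => by positivity)
  have hgK2 : Continuous (fun x : ℝ×ℝ => K / (1+‖x‖)^4) :=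
    continuous_const.div ((continuous_const.add continuous_norm).pow 4)
      (fun x => by positivity)
  have hgint3 : MeasureTheory.Integrable (fun x : (ℝ×ℝ)×ℝ => 2 * (K/(1+‖x‖)^4)^2) := by
    refine (integrable_decay3 (2*K^2)).mono' ?_ ?_
    · exact (continuous_const.mul (hgK3.pow 2)).aestronglyMeasurable
    · refine Filter.Eventually.of_forall fun x => ?_
      have hP : (1:ℝ) ≤ (1+‖x‖)^4 := one_le_pow₀ (one_le_onePlus x)
      have h1 : (0:ℝ) < (1+‖x‖)^4 := by positivity
      rw [Real.norm_eq_abs, abs_of_nonneg (by positivity)]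
      have h2 : (K/(1+‖x‖)^4)^2 = K^2/((1+‖x‖)^4)^2 := by rw [div_pow]
      have h3 : K^2/((1+‖x‖)^4)^2 ≤ K^2/(1+‖x‖)^4 := by
        rw [div_le_div_iff₀ (by positivity) (by positivity)]
        nlinarith [mul_nonneg (mul_nonneg (sq_nonneg K) (le_trans zero_le_one hP)) (sub_nonneg.mpr hP)]
      calc 2*(K/(1+‖x‖)^4)^2 = 2*(K^2/((1+‖x‖)^4)^2) := by rw [h2]
        _ ≤ 2*(K^2/(1+‖x‖)^4) := by linarith
        _ = 2*K^2/(1+‖x‖)^4 := by ring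
  have hgint2 : MeasureTheory.Integrable (fun x : ℝ×ℝ => 2 * (K/(1+‖x‖)^4)^2) := by
    refine (integrable_decay2 (2*K^2)).mono' ?_ ?_
    · exact (continuous_const.mul (hgK2.pow 2)).aestronglyMeasurable
    · refine Filter.Eventually.of_forall fun x => ?_
      have hP : (1:ℝ) ≤ (1+‖x‖)^4 := one_le_pow₀ (one_le_onePlus x)
      have h1 : (0:ℝ) < (1+‖x‖)^4 := by positivity
      rw [Real.norm_eq_abs, abs_of_nonneg (by positivity)]
      have h2 : (K/(1+‖x‖)^4)^2 = K^2/((1+‖x‖)^4)^2 := by rw [div_pow]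
      have h3 : K^2/((1+‖x‖)^4)^2 ≤ K^2/(1+‖x‖)^4 := by
        rw [div_le_div_iff₀ (by positivity) (by positivity)]
        nlinarith [mul_nonneg (mul_nonneg (sq_nonneg K) (le_trans zero_le_one hP)) (sub_nonneg.mpr hP)]
      calc 2*(K/(1+‖x‖)^4)^2 = 2*(K^2/((1+‖x‖)^4)^2) := by rw [h2]
        _ ≤ 2*(K^2/(1+‖x‖)^4) := by linarith
        _ = 2*K^2/(1+‖x‖)^4 := by ring
  have hnum : ∀ {a b P : ℝ}, a ≤ b → (1:ℝ) ≤ P → a / P ≤ b / P := by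
    intro a b P h hP
    have : (0:ℝ) < P := lt_of_lt_of_le one_pos hP
    gcongr
  -- ===== derivative of the A-integral =====
  have hsliceA : ∀ r ∈ Metric.ball t ε, ContinuousOn (fun x => θA x r) UA := by
    intro r hr
    exact hsol.contA.comp (continuous_id.prodMk continuous_const).continuousOn
      (fun x hx => Set.mem_prod.mpr ⟨hx, hballIoo hr⟩)
  have hmeasA : ∀ r ∈ Metric.ball t ε, MeasureTheory.AEStronglyMeasurable
      (fun x => θA x r)
      ((volume : MeasureTheory.Measure ((ℝ×ℝ)×ℝ)).restrict upperHalf) := fun r hr =>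
    ((hsliceA r hr).mono upperHalf_subset_UA).aestronglyMeasurable measurableSet_upperHalf
  have hmeasA' : MeasureTheory.AEStronglyMeasurable (fun x => deriv (θA x) t)
      ((volume : MeasureTheory.Measure ((ℝ×ℝ)×ℝ)).restrict upperHalf) := by
    have h : ContinuousOn (fun x => deriv (θA x) t) UA :=
      hsol.timeDerivContA.comp (continuous_id.prodMk continuous_const).continuousOn
        (fun x hx => Set.mem_prod.mpr ⟨hx, htIoo⟩)
    exact (h.mono upperHalf_subset_UA).aestronglyMeasurable measurableSet_upperHalf
  have hintA : MeasureTheory.Integrable (fun x => (θA x t)^2)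
      ((volume : MeasureTheory.Measure ((ℝ×ℝ)×ℝ)).restrict upperHalf) := by
    refine ((integrable_decay3 (K^2)).restrict).mono' ?_ ?_
    · simp only [pow_two]; exact (hmeasA t htmem).mul (hmeasA t htmem)
    · filter_upwards [MeasureTheory.ae_restrict_mem measurableSet_upperHalf] with x hx
      have hP : (1:ℝ) ≤ (1+‖x‖)^4 := one_le_pow₀ (one_le_onePlus x)
      have h := hbA x (upperHalf_subset_UA hx) t htIoo
      have e : |θA x t| ≤ K / (1+‖x‖)^4 := by
        refine le_trans ?_ (hnum (hMK t htmem) hP)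
        have := abs_nonneg (deriv (θA x) t)
        have := norm_nonneg (fderivWithin ℝ (fun y => θA y t) UA x)
        have := norm_nonneg (fderivWithin ℝ (fderivWithin ℝ (fun y => θA y t) UA) UA x)
        have hred : |θA x t| = |(fun y => θA y t) x| := rfl
        rw [hred]; linarith
      rw [show (θA x t)^2 = θA x t * θA x t from sq (θA x t)]
      exact mul_le_decay hP hK0 e e
  have hgA : ∀ᵐ x ∂((volume : MeasureTheory.Measure ((ℝ×ℝ)×ℝ)).restrict upperHalf),
      ∀ r ∈ Metric.ball t ε, |θA x r| ≤ K/(1+‖x‖)^4 ∧ |deriv (θA x) r| ≤ K/(1+‖x‖)^4 := by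
    filter_upwards [MeasureTheory.ae_restrict_mem measurableSet_upperHalf] with x hx r hr
    have hP : (1:ℝ) ≤ (1+‖x‖)^4 := one_le_pow₀ (one_le_onePlus x)
    have h := hbA x (upperHalf_subset_UA hx) r (hballIoo hr)
    have := norm_nonneg (fderivWithin ℝ (fun y => θA y r) UA x)
    have := norm_nonneg (fderivWithin ℝ (fderivWithin ℝ (fun y => θA y r) UA) UA x)
    have h1 := abs_nonneg (θA x r)
    have h2 := abs_nonneg (deriv (θA x) r)
    have hred : |(fun y => θA y r) x| = |θA x r| := rfl
    rw [hred] at h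
    constructor
    · refine le_trans ?_ (hnum (hMK r hr) hP); linarith
    · refine le_trans ?_ (hnum (hMK r hr) hP); linarith
  have hdA : ∀ᵐ x ∂((volume : MeasureTheory.Measure ((ℝ×ℝ)×ℝ)).restrict upperHalf),
      ∀ r ∈ Metric.ball t ε, HasDerivAt (θA x) (deriv (θA x) r) r := by
    filter_upwards [MeasureTheory.ae_restrict_mem measurableSet_upperHalf] with x hx r hr
    exact (hsol.timeA x (upperHalf_subset_UA hx) r (hballIoo hr)).hasDerivAt
  have HA := dui θA (fun x => K/(1+‖x‖)^4) t ε hε hmeasA hintA hmeasA' hgint3.restrict hgA hdA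
  -- ===== derivative of the B-integral =====
  have hsliceB : ∀ r ∈ Metric.ball t ε, ContinuousOn (fun x => θB x r) UB := by
    intro r hr
    exact hsol.contB.comp (continuous_id.prodMk continuous_const).continuousOn
      (fun x hx => Set.mem_prod.mpr ⟨hx, hballIoo hr⟩)
  have hmeasB : ∀ r ∈ Metric.ball t ε, MeasureTheory.AEStronglyMeasurable
      (fun x => θB x r)
      ((volume : MeasureTheory.Measure ((ℝ×ℝ)×ℝ)).restrict lowerHalf) := fun r hr =>
    ((hsliceB r hr).mono lowerHalf_subset_UB).aestronglyMeasurable measurableSet_lowerHalf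
  have hmeasB' : MeasureTheory.AEStronglyMeasurable (fun x => deriv (θB x) t)
      ((volume : MeasureTheory.Measure ((ℝ×ℝ)×ℝ)).restrict lowerHalf) := by
    have h : ContinuousOn (fun x => deriv (θB x) t) UB :=
      hsol.timeDerivContB.comp (continuous_id.prodMk continuous_const).continuousOn
        (fun x hx => Set.mem_prod.mpr ⟨hx, htIoo⟩)
    exact (h.mono lowerHalf_subset_UB).aestronglyMeasurable measurableSet_lowerHalf
  have hintB : MeasureTheory.Integrable (fun x => (θB x t)^2)
      ((volume : MeasureTheory.Measure ((ℝ×ℝ)×ℝ)).restrict lowerHalf) := by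
    refine ((integrable_decay3 (K^2)).restrict).mono' ?_ ?_
    · simp only [pow_two]; exact (hmeasB t htmem).mul (hmeasB t htmem)
    · filter_upwards [MeasureTheory.ae_restrict_mem measurableSet_lowerHalf] with x hx
      have hP : (1:ℝ) ≤ (1+‖x‖)^4 := one_le_pow₀ (one_le_onePlus x)
      have h := hbB x (lowerHalf_subset_UB hx) t htIoo
      have e : |θB x t| ≤ K / (1+‖x‖)^4 := by
        refine le_trans ?_ (hnum (hMK t htmem) hP)
        have := abs_nonneg (deriv (θB x) t)
        have := norm_nonneg (fderivWithin ℝ (fun y => θB y t) UB x)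
        have := norm_nonneg (fderivWithin ℝ (fderivWithin ℝ (fun y => θB y t) UB) UB x)
        have hred : |θB x t| = |(fun y => θB y t) x| := rfl
        rw [hred]; linarith
      rw [show (θB x t)^2 = θB x t * θB x t from sq (θB x t)]
      exact mul_le_decay hP hK0 e e
  have hgB : ∀ᵐ x ∂((volume : MeasureTheory.Measure ((ℝ×ℝ)×ℝ)).restrict lowerHalf),
      ∀ r ∈ Metric.ball t ε, |θB x r| ≤ K/(1+‖x‖)^4 ∧ |deriv (θB x) r| ≤ K/(1+‖x‖)^4 := by
    filter_upwards [MeasureTheory.ae_restrict_mem measurableSet_lowerHalf] with x hx r hr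
    have hP : (1:ℝ) ≤ (1+‖x‖)^4 := one_le_pow₀ (one_le_onePlus x)
    have h := hbB x (lowerHalf_subset_UB hx) r (hballIoo hr)
    have := norm_nonneg (fderivWithin ℝ (fun y => θB y r) UB x)
    have := norm_nonneg (fderivWithin ℝ (fderivWithin ℝ (fun y => θB y r) UB) UB x)
    have h1 := abs_nonneg (θB x r)
    have h2 := abs_nonneg (deriv (θB x) r)
    have hred : |(fun y => θB y r) x| = |θB x r| := rfl
    rw [hred] at h
    constructor
    · refine le_trans ?_ (hnum (hMK r hr) hP); linarith
    · refine le_trans ?_ (hnum (hMK r hr) hP); linarith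
  have hdB : ∀ᵐ x ∂((volume : MeasureTheory.Measure ((ℝ×ℝ)×ℝ)).restrict lowerHalf),
      ∀ r ∈ Metric.ball t ε, HasDerivAt (θB x) (deriv (θB x) r) r := by
    filter_upwards [MeasureTheory.ae_restrict_mem measurableSet_lowerHalf] with x hx r hr
    exact (hsol.timeB x (lowerHalf_subset_UB hx) r (hballIoo hr)).hasDerivAt
  have HB := dui θB (fun x => K/(1+‖x‖)^4) t ε hε hmeasB hintB hmeasB' hgint3.restrict hgB hdB
  -- ===== derivative of the S-integral =====
  have hsliceS : ∀ r ∈ Metric.ball t ε, Continuous (fun xh => θS xh r) := by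
    intro r hr
    rw [← continuousOn_univ]
    exact hsol.contS.comp (continuous_id.prodMk continuous_const).continuousOn
      (fun x _ => Set.mem_prod.mpr ⟨Set.mem_univ x, hballIoo hr⟩)
  have hmeasS : ∀ r ∈ Metric.ball t ε, MeasureTheory.AEStronglyMeasurable
      (fun xh => θS xh r) (volume : MeasureTheory.Measure (ℝ×ℝ)) := fun r hr =>
    (hsliceS r hr).aestronglyMeasurable
  have hmeasS' : MeasureTheory.AEStronglyMeasurable (fun xh => deriv (θS xh) t)
      (volume : MeasureTheory.Measure (ℝ×ℝ)) := by
    have h : Continuous (fun xh => deriv (θS xh) t) := by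
      rw [← continuousOn_univ]
      exact hsol.timeDerivContS.comp (continuous_id.prodMk continuous_const).continuousOn
        (fun x _ => Set.mem_prod.mpr ⟨Set.mem_univ x, htIoo⟩)
    exact h.aestronglyMeasurable
  have hintS : MeasureTheory.Integrable (fun xh => (θS xh t)^2)
      (volume : MeasureTheory.Measure (ℝ×ℝ)) := by
    refine (integrable_decay2 (K^2)).mono' ?_ ?_
    · simp only [pow_two]; exact (hmeasS t htmem).mul (hmeasS t htmem)
    · refine Filter.Eventually.of_forall fun xh => ?_
      have hP : (1:ℝ) ≤ (1+‖xh‖)^4 := one_le_pow₀ (one_le_onePlus xh)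
      have h := hbS xh t htIoo
      have e : |θS xh t| ≤ K / (1+‖xh‖)^4 := by
        refine le_trans ?_ (hnum (hMK t htmem) hP)
        have := abs_nonneg (deriv (θS xh) t)
        have := norm_nonneg (fderiv ℝ (fun y => θS y t) xh)
        have := norm_nonneg (fderiv ℝ (fderiv ℝ (fun y => θS y t)) xh)
        have hred : |θS xh t| = |(fun y => θS y t) xh| := rfl
        rw [hred]; linarith
      rw [show (θS xh t)^2 = θS xh t * θS xh t from sq (θS xh t)]
      exact mul_le_decay hP hK0 e e
  have hgS : ∀ᵐ xh ∂(volume : MeasureTheory.Measure (ℝ×ℝ)),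
      ∀ r ∈ Metric.ball t ε, |θS xh r| ≤ K/(1+‖xh‖)^4 ∧ |deriv (θS xh) r| ≤ K/(1+‖xh‖)^4 := by
    refine Filter.Eventually.of_forall fun xh r hr => ?_
    have hP : (1:ℝ) ≤ (1+‖xh‖)^4 := one_le_pow₀ (one_le_onePlus xh)
    have h := hbS xh r (hballIoo hr)
    have := norm_nonneg (fderiv ℝ (fun y => θS y r) xh)
    have := norm_nonneg (fderiv ℝ (fderiv ℝ (fun y => θS y r)) xh)
    have h1 := abs_nonneg (θS xh r)
    have h2 := abs_nonneg (deriv (θS xh) r)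
    have hred : |(fun y => θS y r) xh| = |θS xh r| := rfl
    rw [hred] at h
    constructor
    · refine le_trans ?_ (hnum (hMK r hr) hP); linarith
    · refine le_trans ?_ (hnum (hMK r hr) hP); linarith
  have hdS : ∀ᵐ xh ∂(volume : MeasureTheory.Measure (ℝ×ℝ)),
      ∀ r ∈ Metric.ball t ε, HasDerivAt (θS xh) (deriv (θS xh) r) r :=
    Filter.Eventually.of_forall fun xh r hr =>
      (hsol.timeS xh r (hballIoo hr)).hasDerivAt
  have HS := dui θS (fun xh => K/(1+‖xh‖)^4) t ε hε hmeasS hintS hmeasS' hgint2 hgS hdS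
  -- ===== total derivative =====
  have hE : HasDerivAt (energy αS θA θB θS)
      ((∫ x in upperHalf, 2 * θA x t * deriv (θA x) t)
        + (∫ x in lowerHalf, 2 * θB x t * deriv (θB x) t)
        + αS * ∫ xh : ℝ×ℝ, 2 * θS xh t * deriv (θS xh) t) t := by
    have h := (HA.add HB).add (HS.const_mul αS)
    have heq : energy αS θA θB θS = fun r =>
        ((∫ x in upperHalf, (θA x r)^2) + (∫ x in lowerHalf, (θB x r)^2))
          + αS * ∫ xh : ℝ×ℝ, (θS xh r)^2 := by
      funext r
      unfold energy
      ring
    rw [heq]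
    exact h
  -- ===== identification of the derivative =====
  have hA2 := hsol.spaceA t htIoo
  have hB2 := hsol.spaceB t htIoo
  have hS2 := hsol.spaceS t htIoo
  have hCA : 0 ≤ M t := by
    have h := hbA 0 (le_refl (0:ℝ)) t htIoo
    simp only [norm_zero, add_zero, one_pow, div_one] at h
    have h1 := abs_nonneg (θA 0 t)
    have h2 := abs_nonneg (deriv (θA 0) t)
    have h3 := norm_nonneg (fderivWithin ℝ (fun y => θA y t) UA 0)
    have h4 := norm_nonneg (fderivWithin ℝ (fderivWithin ℝ (fun y => θA y t) UA) UA 0)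
    linarith
  have hbA' : ∀ x ∈ UA, |θA x t| + ‖fderivWithin ℝ (fun y => θA y t) UA x‖
      + ‖fderivWithin ℝ (fderivWithin ℝ (fun y => θA y t) UA) UA x‖ ≤ M t / (1+‖x‖)^4 := by
    intro x hx
    have h := hbA x hx t htIoo
    have h2 := abs_nonneg (deriv (θA x) t)
    linarith
  have hbB' : ∀ x ∈ UB, |θB x t| + ‖fderivWithin ℝ (fun y => θB y t) UB x‖
      + ‖fderivWithin ℝ (fderivWithin ℝ (fun y => θB y t) UB) UB x‖ ≤ M t / (1+‖x‖)^4 := by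
    intro x hx
    have h := hbB x hx t htIoo
    have h2 := abs_nonneg (deriv (θB x) t)
    linarith
  have hbS' : ∀ xh : ℝ×ℝ, |θS xh t| + ‖fderiv ℝ (fun y => θS y t) xh‖
      + ‖fderiv ℝ (fderiv ℝ (fun y => θS y t)) xh‖ ≤ M t / (1+‖xh‖)^4 := by
    intro xh
    have h := hbS xh t htIoo
    have h2 := abs_nonneg (deriv (θS xh) t)
    linarith
  -- bulk identities
  have eA1 : (∫ x in upperHalf, 2 * θA x t * deriv (θA x) t)
      = 2*κA * ∫ x in upperHalf, θA x t * lapW UA (fun y => θA y t) x := by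
    rw [← MeasureTheory.integral_const_mul]
    refine MeasureTheory.setIntegral_congr_fun measurableSet_upperHalf ?_
    intro x hx
    simp only
    rw [hsol.pdeA x hx t htIoo]
    ring
  have eB1 : (∫ x in lowerHalf, 2 * θB x t * deriv (θB x) t)
      = 2*κB * ∫ x in lowerHalf, θB x t * lapW UB (fun y => θB y t) x := by
    rw [← MeasureTheory.integral_const_mul]
    refine MeasureTheory.setIntegral_congr_fun measurableSet_lowerHalf ?_
    intro x hx
    simp only
    rw [hsol.pdeB x hx t htIoo]
    ring
  have eA : (∫ x in upperHalf, θA x t * lapW UA (fun y => θA y t) x)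
        + (∫ x in upperHalf, gradSqW UA (fun y => θA y t) x)
      = - ∫ xh : ℝ×ℝ, θA (xh,0) t * (fderivWithin ℝ (fun y => θA y t) UA (xh,0)) e3 := by
    rw [← MeasureTheory.integral_add (philap_intOnA hA2 hCA hbA') (gradSq_intOnA hA2 hCA hbA')]
    exact ibpUA hA2 hCA hbA'
  have eB : (∫ x in lowerHalf, θB x t * lapW UB (fun y => θB y t) x)
        + (∫ x in lowerHalf, gradSqW UB (fun y => θB y t) x)
      = ∫ xh : ℝ×ℝ, θB (xh,0) t * (fderivWithin ℝ (fun y => θB y t) UB (xh,0)) e3 := by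
    rw [← MeasureTheory.integral_add (philap_intOnB hB2 hCA hbB') (gradSq_intOnB hB2 hCA hbB')]
    exact ibpUB hB2 hCA hbB'
  have eS : (∫ xh : ℝ×ℝ, θS xh t * lapH (fun y => θS y t) xh)
        + (∫ xh : ℝ×ℝ, gradSqH (fun y => θS y t) xh) = 0 := by
    rw [← MeasureTheory.integral_add (psilapH_int hS2 hCA hbS') (gradSqH_int hS2 hCA hbS')]
    exact ibp2D hS2 hCA hbS'
  -- boundary-product integrability
  have hnorm0 : ∀ xh : ℝ×ℝ, ‖((xh, (0:ℝ)) : (ℝ×ℝ)×ℝ)‖ = ‖xh‖ := by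
    intro xh; simp [Prod.norm_def]
  have hSAint : MeasureTheory.Integrable
      (fun xh : ℝ×ℝ => θS xh t * (fderivWithin ℝ (fun y => θA y t) UA (xh,0)) e3) := by
    refine (integrable_decay2 ((M t)^2)).mono' ?_ ?_
    · have hc2 : Continuous (fun xh : ℝ×ℝ =>
          (fderivWithin ℝ (fun y => θA y t) UA (xh,0)) e3) := by
        rw [← continuousOn_univ]
        exact ((contOn_f1A hA2).clm_apply continuousOn_const).comp
          (continuous_id.prodMk continuous_const).continuousOn
          (fun xh _ => (le_refl (0:ℝ)))
      exact ((hsliceS t htmem).mul hc2).aestronglyMeasurable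
    · refine Filter.Eventually.of_forall fun xh => ?_
      have hP : (1:ℝ) ≤ (1+‖xh‖)^4 := one_le_pow₀ (one_le_onePlus xh)
      have hS1 := hbS' xh
      have e1 : |θS xh t| ≤ M t/(1+‖xh‖)^4 := by
        have := norm_nonneg (fderiv ℝ (fun y => θS y t) xh)
        have := norm_nonneg (fderiv ℝ (fderiv ℝ (fun y => θS y t)) xh)
        linarith
      have hu : ((xh,(0:ℝ)) : (ℝ×ℝ)×ℝ) ∈ UA := by exact le_refl (0:ℝ)
      obtain ⟨_, b2, _⟩ := split3 (hbA' _ hu) (abs_nonneg _) (norm_nonneg _) (ContinuousLinearMap.opNorm_nonneg _)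
      have e2 : |(fderivWithin ℝ (fun y => θA y t) UA (xh,0)) e3| ≤ M t/(1+‖xh‖)^4 := by
        have := clm_apply_le b2 norm_e3.le
        rwa [hnorm0 xh] at this
      exact mul_le_decay hP hCA e1 e2
  have hSBint : MeasureTheory.Integrable
      (fun xh : ℝ×ℝ => θS xh t * (fderivWithin ℝ (fun y => θB y t) UB (xh,0)) e3) := by
    refine (integrable_decay2 ((M t)^2)).mono' ?_ ?_
    · have hc2 : Continuous (fun xh : ℝ×ℝ =>
          (fderivWithin ℝ (fun y => θB y t) UB (xh,0)) e3) := by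
        rw [← continuousOn_univ]
        exact ((contOn_f1B hB2).clm_apply continuousOn_const).comp
          (continuous_id.prodMk continuous_const).continuousOn
          (fun xh _ => (le_refl (0:ℝ)))
      exact ((hsliceS t htmem).mul hc2).aestronglyMeasurable
    · refine Filter.Eventually.of_forall fun xh => ?_
      have hP : (1:ℝ) ≤ (1+‖xh‖)^4 := one_le_pow₀ (one_le_onePlus xh)
      have hS1 := hbS' xh
      have e1 : |θS xh t| ≤ M t/(1+‖xh‖)^4 := by
        have := norm_nonneg (fderiv ℝ (fun y => θS y t) xh)
        have := norm_nonneg (fderiv ℝ (fderiv ℝ (fun y => θS y t)) xh)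
        linarith
      have hu : ((xh,(0:ℝ)) : (ℝ×ℝ)×ℝ) ∈ UB := by exact le_refl (0:ℝ)
      obtain ⟨_, b2, _⟩ := split3 (hbB' _ hu) (abs_nonneg _) (norm_nonneg _) (ContinuousLinearMap.opNorm_nonneg _)
      have e2 : |(fderivWithin ℝ (fun y => θB y t) UB (xh,0)) e3| ≤ M t/(1+‖xh‖)^4 := by
        have := clm_apply_le b2 norm_e3.le
        rwa [hnorm0 xh] at this
      exact mul_le_decay hP hCA e1 e2
  -- surface equation identity
  have eS1 : αS * (∫ xh : ℝ×ℝ, 2 * θS xh t * deriv (θS xh) t)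
      = 2*κS * (∫ xh : ℝ×ℝ, θS xh t * lapH (fun y => θS y t) xh)
        + 2*κA * (∫ xh : ℝ×ℝ, θS xh t * (fderivWithin ℝ (fun y => θA y t) UA (xh,0)) e3)
        - 2*κB * (∫ xh : ℝ×ℝ, θS xh t * (fderivWithin ℝ (fun y => θB y t) UB (xh,0)) e3) := by
    have hf : MeasureTheory.Integrable (fun xh : ℝ×ℝ =>
        2*κS * (θS xh t * lapH (fun y => θS y t) xh)) :=
      (psilapH_int hS2 hCA hbS').const_mul _
    have hg : MeasureTheory.Integrable (fun xh : ℝ×ℝ =>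
        2*κA * (θS xh t * (fderivWithin ℝ (fun y => θA y t) UA (xh,0)) e3)) :=
      hSAint.const_mul _
    have hh : MeasureTheory.Integrable (fun xh : ℝ×ℝ =>
        2*κB * (θS xh t * (fderivWithin ℝ (fun y => θB y t) UB (xh,0)) e3)) :=
      hSBint.const_mul _
    calc αS * (∫ xh : ℝ×ℝ, 2 * θS xh t * deriv (θS xh) t)
        = ∫ xh : ℝ×ℝ, αS * (2 * θS xh t * deriv (θS xh) t) :=
          (MeasureTheory.integral_const_mul _ _).symm
      _ = ∫ xh : ℝ×ℝ, (2*κS * (θS xh t * lapH (fun y => θS y t) xh)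
            + 2*κA * (θS xh t * (fderivWithin ℝ (fun y => θA y t) UA (xh,0)) e3)
            - 2*κB * (θS xh t * (fderivWithin ℝ (fun y => θB y t) UB (xh,0)) e3)) := by
          refine MeasureTheory.integral_congr_ae (Filter.Eventually.of_forall fun xh => ?_)
          have hp : αS * deriv (θS xh) t = κS * lapH (fun y => θS y t) xh
              + κA * (fderivWithin ℝ (fun y => θA y t) UA (xh,0)) e3
              - κB * (fderivWithin ℝ (fun y => θB y t) UB (xh,0)) e3 :=
            hsol.pdeS xh t htIoo
          linear_combination (2 * θS xh t) * hp
      _ = 2*κS * (∫ xh : ℝ×ℝ, θS xh t * lapH (fun y => θS y t) xh)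
            + 2*κA * (∫ xh : ℝ×ℝ, θS xh t * (fderivWithin ℝ (fun y => θA y t) UA (xh,0)) e3)
            - 2*κB * (∫ xh : ℝ×ℝ, θS xh t * (fderivWithin ℝ (fun y => θB y t) UB (xh,0)) e3) := by
          have hfg : MeasureTheory.Integrable (fun xh : ℝ×ℝ =>
              2*κS * (θS xh t * lapH (fun y => θS y t) xh)
                + 2*κA * (θS xh t * (fderivWithin ℝ (fun y => θA y t) UA (xh,0)) e3)) :=
            hf.add hg
          rw [MeasureTheory.integral_sub hfg hh, MeasureTheory.integral_add hf hg,
            MeasureTheory.integral_const_mul, MeasureTheory.integral_const_mul,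
            MeasureTheory.integral_const_mul]
  -- interface conditions
  have hBAeq : (∫ xh : ℝ×ℝ, θS xh t * (fderivWithin ℝ (fun y => θA y t) UA (xh,0)) e3)
      = ∫ xh : ℝ×ℝ, θA (xh,0) t * (fderivWithin ℝ (fun y => θA y t) UA (xh,0)) e3 := by
    refine MeasureTheory.integral_congr_ae (Filter.Eventually.of_forall fun xh => ?_)
    simp only
    rw [← hsol.interfaceA xh t htIoo]
  have hBBeq : (∫ xh : ℝ×ℝ, θS xh t * (fderivWithin ℝ (fun y => θB y t) UB (xh,0)) e3)
      = ∫ xh : ℝ×ℝ, θB (xh,0) t * (fderivWithin ℝ (fun y => θB y t) UB (xh,0)) e3 := by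
    refine MeasureTheory.integral_congr_ae (Filter.Eventually.of_forall fun xh => ?_)
    simp only
    rw [← hsol.interfaceB xh t htIoo]
  -- final arithmetic
  have hLA : (∫ x in upperHalf, θA x t * lapW UA (fun y => θA y t) x)
      = - (∫ xh : ℝ×ℝ, θA (xh,0) t * (fderivWithin ℝ (fun y => θA y t) UA (xh,0)) e3)
        - (∫ x in upperHalf, gradSqW UA (fun y => θA y t) x) := by linarith
  have hLB : (∫ x in lowerHalf, θB x t * lapW UB (fun y => θB y t) x)
      = (∫ xh : ℝ×ℝ, θB (xh,0) t * (fderivWithin ℝ (fun y => θB y t) UB (xh,0)) e3)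
        - (∫ x in lowerHalf, gradSqW UB (fun y => θB y t) x) := by linarith
  have hLS : (∫ xh : ℝ×ℝ, θS xh t * lapH (fun y => θS y t) xh)
      = - ∫ xh : ℝ×ℝ, gradSqH (fun y => θS y t) xh := by linarith
  have final : (∫ x in upperHalf, 2 * θA x t * deriv (θA x) t)
        + (∫ x in lowerHalf, 2 * θB x t * deriv (θB x) t)
        + αS * ∫ xh : ℝ×ℝ, 2 * θS xh t * deriv (θS xh) t
      = -2 * κA * (∫ x in upperHalf, gradSqW UA (fun y => θA y t) x)
        - 2 * κB * (∫ x in lowerHalf, gradSqW UB (fun y => θB y t) x)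
        - 2 * κS * ∫ xh : ℝ×ℝ, gradSqH (fun y => θS y t) xh := by
    rw [eA1, eB1, eS1, hBAeq, hBBeq, hLA, hLB, hLS]
    ring
  exact final ▸ hE


end
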